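/- Let 0 < k < n and let O_{k,n} ⊂ ℝ^{[k]×[n−k]} be the convex hull of the characteristic vectors {χ_I : I ∈ V_{k,n}}. Then for every point x ∈ O_{k,n} there exist a unique set S ⊆ V_{k,n} of pairwise noncrossing tuples and unique strictly positive coefficients (α_I)_{I ∈ S} with Σ_{I ∈ S} α_I = 1 and x = Σ_{I ∈ S} α_I χ_I. (This expresses that the noncrossing complex Δ^{NC}_{k,n} is a triangulation of the order polytope O_{k,n}.) -/

import Mathlib

/-- Two arcs `(i < i')` and `(j < j')` cross if `i < j < i' < j'` or `j < i < j' < i'`. -/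
def Cross (i i' j j' : ℕ) : Prop :=
  (i < j ∧ j < i' ∧ i' < j') ∨ (j < i ∧ i < j' ∧ j' < i')

/-- Two arcs `(i < i')` and `(j < j')` nest if `i < j < j' < i'` or `j < i < i' < j'`. -/
def Nest (i i' j j' : ℕ) : Prop :=
  (i < j ∧ j < j' ∧ j' < i') ∨ (j < i ∧ i < i' ∧ i' < j')

/-- `I : Fin k → ℕ` represents an element of `V_{k,n}`: a strictly increasing
`k`-tuple with entries in `[n] = {1, …, n}`. -/
def IsVkn (n : ℕ) {k : ℕ} (I : Fin k → ℕ) : Prop :=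
  StrictMono I ∧ ∀ a, 1 ≤ I a ∧ I a ≤ n

/-- `I, J ∈ V_{k,n}` are noncrossing if for all indices `a < b` such that
`I l = J l` for all `a < l < b`, the arcs `(I a < I b)` and `(J a < J b)` do not cross. -/
def NonCrossing {k : ℕ} (I J : Fin k → ℕ) : Prop :=
  ∀ a b : Fin k, a < b → (∀ l : Fin k, a < l → l < b → I l = J l) →
    ¬ Cross (I a) (I b) (J a) (J b)

/-- `I, J ∈ V_{k,n}` are nonnesting if for all indices `a < b`
the arcs `(I a < I b)` and `(J a < J b)` do not nest. -/
def NonNesting {k : ℕ} (I J : Fin k → ℕ) : Prop :=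
  ∀ a b : Fin k, a < b → ¬ Nest (I a) (I b) (J a) (J b)

/-- `x` is an entry of the tuple `I` (i.e. `x` belongs to `I` viewed as a subset of `[n]`). -/
def MemT {k : ℕ} (I : Fin k → ℕ) (x : ℕ) : Prop := ∃ a, I a = x

/-- The characteristic vector `χ_I` as a real vector in `ℝ^{[k]×[m]}` (`m = n−k`),
in 0-based coordinates: `χ_I(a,b) = 1` iff `i_{a+1} ≤ a+b+1`. -/
noncomputable def chiR (m : ℕ) {k : ℕ} (I : Fin k → ℕ) : Fin k × Fin m → ℝ :=
  fun p => if I p.1 ≤ p.1.val + p.2.val + 1 then 1 else 0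

namespace NCwork
noncomputable section
local instance : DecidableEq (ℕ → ℕ) := fun f g => Classical.propDecidable _
local instance : DecidableEq ℝ := fun a b => Classical.propDecidable _

def SM (k : ℕ) (I : ℕ → ℕ) : Prop := ∀ a b : ℕ, a < b → b < k → I a < I b
def Std (k : ℕ) (I : ℕ → ℕ) : Prop := ∀ a, k ≤ a → I a = 0
def NC (k : ℕ) (I J : ℕ → ℕ) : Prop :=
  ∀ a b : ℕ, a < b → b < k → (∀ l, a < l → l < b → I l = J l) →
    ¬ Cross (I a) (I b) (J a) (J b)
noncomputable def mar (S : Finset (ℕ → ℕ)) (α : (ℕ → ℕ) → ℝ) (a v : ℕ) : ℝ :=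
  ∑ I ∈ S.filter (fun I => I a = v), α I
def Ok (k : ℕ) (S : Finset (ℕ → ℕ)) (α : (ℕ → ℕ) → ℝ) : Prop :=
  (∀ I ∈ S, SM k I) ∧ (∀ I ∈ S, Std k I) ∧ (∀ I ∈ S, 0 < α I)
def Goodk (k : ℕ) (S : Finset (ℕ → ℕ)) (α : (ℕ → ℕ) → ℝ) : Prop :=
  Ok k S α ∧ ∀ I ∈ S, ∀ J ∈ S, I ≠ J → NC k I J
def picore (k : ℕ) (I : ℕ → ℕ) : ℕ → ℕ := fun a => if a < k then I a else 0
def snocc (k : ℕ) (u : ℕ → ℕ) (v : ℕ) : ℕ → ℕ :=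
  fun a => if a < k then u a else if a = k then v else 0
noncomputable def palpha (S : Finset (ℕ → ℕ)) (α : (ℕ → ℕ) → ℝ) (k : ℕ) :
    (ℕ → ℕ) → ℝ := fun u => ∑ I ∈ S.filter (fun I => picore k I = u), α I

lemma sm_le {k : ℕ} {I : ℕ → ℕ} (h : SM k I) {a b : ℕ} (hab : a ≤ b) (hb : b < k) :
    I a ≤ I b := by
  rcases Nat.lt_or_ge a b with h1 | h1
  · exact le_of_lt (h a b h1 hb)
  · have : a = b := by omega
    rw [this]

lemma picore_eval_lt {k : ℕ} {I : ℕ → ℕ} {a : ℕ} (ha : a < k) : picore k I a = I a := by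
  unfold picore; rw [if_pos ha]

lemma picore_std (k I) : Std k (picore k I) := by
  intro a ha; unfold picore; rw [if_neg (by omega)]

lemma picore_sm {k : ℕ} {I : ℕ → ℕ} (h : SM (k+1) I) : SM k (picore k I) := by
  intro a b hab hb
  rw [picore_eval_lt (by omega), picore_eval_lt hb]
  exact h a b hab (by omega)

lemma picore_nc {k : ℕ} {I J : ℕ → ℕ} (h : NC (k+1) I J) :
    NC k (picore k I) (picore k J) := by
  intro a b hab hb hmid
  rw [picore_eval_lt (show a < k by omega), picore_eval_lt hb,
    picore_eval_lt (show a < k by omega), picore_eval_lt hb]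
  apply h a b hab (by omega)
  intro l hl1 hl2
  have hlk : l < k := by omega
  have := hmid l hl1 hl2
  rwa [picore_eval_lt hlk, picore_eval_lt hlk] at this

lemma snocc_eval_lt {k : ℕ} {u : ℕ → ℕ} {v a : ℕ} (ha : a < k) : snocc k u v a = u a := by
  unfold snocc; rw [if_pos ha]

lemma snocc_eval_k (k u v) : snocc k u v k = v := by
  unfold snocc; rw [if_neg (by omega), if_pos rfl]

lemma snocc_std (k u v) : Std (k+1) (snocc k u v) := by
  intro a ha; unfold snocc; rw [if_neg (by omega), if_neg (by omega)]

lemma snocc_picore (k : ℕ) (u : ℕ → ℕ) (v : ℕ) (hu : Std k u) :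
    picore k (snocc k u v) = u := by
  funext a
  rcases Nat.lt_or_ge a k with ha | ha
  · rw [picore_eval_lt ha, snocc_eval_lt ha]
  · unfold picore; rw [if_neg (by omega), (hu a ha).symm]

lemma snocc_sm {k : ℕ} {u : ℕ → ℕ} {v : ℕ} (hk : 1 ≤ k) (hu : SM k u)
    (hv : u (k-1) < v) : SM (k+1) (snocc k u v) := by
  intro a b hab hb
  rcases Nat.lt_or_ge b k with hbk | hbk
  · rw [snocc_eval_lt (by omega), snocc_eval_lt hbk]
    exact hu a b hab hbk
  · have hbk' : b = k := by omega
    rw [hbk', snocc_eval_lt (show a < k by omega), snocc_eval_k]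
    have : u a ≤ u (k-1) := sm_le hu (by omega) (by omega)
    omega

lemma eq_snocc_of_picore {k : ℕ} {t u : ℕ → ℕ} (hstd : Std (k+1) t)
    (hpi : picore k t = u) : t = snocc k u (t k) := by
  funext a
  rcases Nat.lt_or_ge a k with ha | ha
  · rw [snocc_eval_lt ha, ← hpi, picore_eval_lt ha]
  · rcases Nat.lt_or_ge k a with ha2 | ha2
    · rw [hstd a (by omega)]
      unfold snocc; rw [if_neg (by omega), if_neg (by omega)]
    · have : a = k := by omega
      subst this
      rw [snocc_eval_k]

lemma goodk_subset {k S α} {T : Finset (ℕ → ℕ)} (h : Goodk k S α) (hT : T ⊆ S) :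
    Goodk k T α :=
  ⟨⟨fun I hI => h.1.1 I (hT hI), fun I hI => h.1.2.1 I (hT hI),
    fun I hI => h.1.2.2 I (hT hI)⟩,
   fun I hI J hJ => h.2 I (hT hI) J (hT hJ)⟩

lemma mar_union {S T : Finset (ℕ → ℕ)} (h : Disjoint S T) (α a v) :
    mar (S ∪ T) α a v = mar S α a v + mar T α a v := by
  unfold mar
  rw [Finset.filter_union]
  exact Finset.sum_union (Finset.disjoint_filter_filter h)

lemma mar_filter_ne {S : Finset (ℕ → ℕ)} {α : (ℕ → ℕ) → ℝ} {k : ℕ} (u : ℕ → ℕ)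
    (a v : ℕ) :
    mar S α a v = mar (S.filter (fun t => picore k t = u)) α a v
      + mar (S.filter (fun t => picore k t ≠ u)) α a v := by
  have : S = S.filter (fun t => picore k t = u) ∪ S.filter (fun t => picore k t ≠ u) := by
    rw [Finset.filter_union_filter_not_eq]
  conv_lhs => rw [this]
  exact mar_union (Finset.disjoint_filter_filter_not S S _) α a v

lemma sum_palpha (S : Finset (ℕ → ℕ)) (α : (ℕ → ℕ) → ℝ) (k : ℕ) :
    ∑ u ∈ S.image (picore k), palpha S α k u = ∑ I ∈ S, α I := by
  unfold palpha
  exact Finset.sum_fiberwise_of_maps_to (fun I hI => Finset.mem_image_of_mem _ hI) α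

lemma mar_proj (S : Finset (ℕ → ℕ)) (α : (ℕ → ℕ) → ℝ) (k a v : ℕ) (ha : a < k) :
    mar (S.image (picore k)) (palpha S α k) a v = mar S α a v := by
  unfold mar palpha
  rw [Finset.sum_filter]
  have h1 : ∀ u ∈ S.image (picore k),
      (if u a = v then ∑ I ∈ S.filter (fun I => picore k I = u), α I else 0)
      = ∑ I ∈ S.filter (fun I => picore k I = u), (if I a = v then α I else 0) := by
    intro u hu
    split
    · rename_i huv
      apply Finset.sum_congr rfl
      intro I hI
      have hpi := (Finset.mem_filter.mp hI).2
      have : I a = v := by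
        rw [← picore_eval_lt (I := I) ha, hpi, huv]
      rw [if_pos this]
    · rename_i huv
      symm
      apply Finset.sum_eq_zero
      intro I hI
      have hpi := (Finset.mem_filter.mp hI).2
      rw [if_neg]
      intro hIa
      apply huv
      rw [← hpi, picore_eval_lt ha, hIa]
  rw [Finset.sum_congr rfl h1]
  have h2 := Finset.sum_fiberwise_of_maps_to (t := S.image (picore k))
      (fun I hI => Finset.mem_image_of_mem (picore k) hI)
      (fun I => if I a = v then α I else 0)
  exact h2.trans (Finset.sum_filter (fun I => I a = v) α).symm

lemma goodk_proj {k : ℕ} {S : Finset (ℕ → ℕ)} {α : (ℕ → ℕ) → ℝ}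
    (h : Goodk (k+1) S α) :
    Goodk k (S.image (picore k)) (palpha S α k) := by
  obtain ⟨⟨hsm, hstd, hpos⟩, hnc⟩ := h
  refine ⟨⟨?_, ?_, ?_⟩, ?_⟩
  · intro u hu
    obtain ⟨I, hI, rfl⟩ := Finset.mem_image.mp hu
    exact picore_sm (hsm I hI)
  · intro u hu
    obtain ⟨I, hI, rfl⟩ := Finset.mem_image.mp hu
    exact picore_std k I
  · intro u hu
    obtain ⟨I, hI, hIu⟩ := Finset.mem_image.mp hu
    unfold palpha
    apply Finset.sum_pos
    · intro J hJ
      exact hpos J (Finset.mem_filter.mp hJ).1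
    · exact ⟨I, Finset.mem_filter.mpr ⟨hI, hIu⟩⟩
  · intro u hu w hw hne
    obtain ⟨I, hI, hIu⟩ := Finset.mem_image.mp hu
    obtain ⟨J, hJ, hJw⟩ := Finset.mem_image.mp hw
    have hIJ : I ≠ J := by
      intro h'; apply hne; rw [← hIu, ← hJw, h']
    have := picore_nc (hnc I hI J hJ hIJ)
    rwa [hIu, hJw] at this

lemma ok_proj {k : ℕ} {S : Finset (ℕ → ℕ)} {α : (ℕ → ℕ) → ℝ}
    (h : Ok (k+1) S α) :
    Ok k (S.image (picore k)) (palpha S α k) := by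
  obtain ⟨hsm, hstd, hpos⟩ := h
  refine ⟨?_, ?_, ?_⟩
  · intro u hu
    obtain ⟨I, hI, rfl⟩ := Finset.mem_image.mp hu
    exact picore_sm (hsm I hI)
  · intro u hu
    obtain ⟨I, hI, rfl⟩ := Finset.mem_image.mp hu
    exact picore_std k I
  · intro u hu
    obtain ⟨I, hI, hIu⟩ := Finset.mem_image.mp hu
    unfold palpha
    apply Finset.sum_pos
    · intro J hJ
      exact hpos J (Finset.mem_filter.mp hJ).1
    · exact ⟨I, Finset.mem_filter.mpr ⟨hI, hIu⟩⟩


lemma cross_symm {i i' j j' : ℕ} : Cross i i' j j' ↔ Cross j j' i i' := by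
  unfold Cross; tauto

lemma mar_nonneg {S α a v} (h : ∀ I ∈ S, 0 < α I) : 0 ≤ mar S α a v := by
  refine Finset.sum_nonneg fun I hI => ?_
  exact le_of_lt (h I (Finset.mem_filter.mp hI).1)

lemma mar_pos_elem {S α a v} (h : mar S α a v ≠ 0) : ∃ I ∈ S, I a = v := by
  by_contra hc
  push_neg at hc
  apply h
  unfold mar
  apply Finset.sum_eq_zero
  intro I hI
  rcases Finset.mem_filter.mp hI with ⟨h1, h2⟩
  exact absurd h2 (hc I h1)

lemma mem_mar_le {S : Finset (ℕ → ℕ)} {α a v} (hpos : ∀ I ∈ S, 0 < α I)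
    {I : ℕ → ℕ} (hI : I ∈ S) (hv : I a = v) : α I ≤ mar S α a v := by
  unfold mar
  refine Finset.single_le_sum (fun J hJ => le_of_lt (hpos J (Finset.mem_filter.mp hJ).1)) ?_
  exact Finset.mem_filter.mpr ⟨hI, hv⟩




def key (V k : ℕ) (u : ℕ → ℕ) : ℕ := ∑ a ∈ Finset.range k, u a * V ^ a

lemma key_succ (V k u) : key V (k+1) u = key V k u + u k * V ^ k := by
  unfold key; rw [Finset.sum_range_succ]

lemma key_bound {V k : ℕ} {u : ℕ → ℕ} (hu : ∀ a, a < k → u a < V) :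
    key V k u < V ^ k := by
  induction k with
  | zero => simp [key]
  | succ k ih =>
    have h1 : key V k u < V ^ k := ih (fun a ha => hu a (by omega))
    have h2 : u k < V := hu k (by omega)
    have h3 : u k * V ^ k ≤ (V - 1) * V ^ k := by
      apply Nat.mul_le_mul_right
      omega
    rw [key_succ]
    have hV : 1 ≤ V := by
      have := hu k (by omega); omega
    have : (V - 1) * V ^ k + V ^ k = V ^ (k + 1) := by
      rw [Nat.sub_one_mul]
      have : V ^ k ≤ V * V ^ k := Nat.le_mul_of_pos_left _ (by omega)
      rw [pow_succ]; rw [mul_comm (V^k) V]; omega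
    omega

lemma key_lt_aux {V k : ℕ} {u w : ℕ → ℕ} (hu : ∀ a, a < k → u a < V)
    (hw : ∀ a, a < k → w a < V) (h : key V k w < key V k u) :
    ∃ a, a < k ∧ w a < u a ∧ ∀ b, a < b → b < k → w b = u b := by
  induction k with
  | zero => simp [key] at h
  | succ k ih =>
    rcases lt_trichotomy (w k) (u k) with hlt | heq | hgt
    · exact ⟨k, by omega, hlt, fun b hb1 hb2 => by omega⟩
    · rw [key_succ, key_succ, heq] at h
      have h' : key V k w < key V k u := by omega
      obtain ⟨a, ha1, ha2, ha3⟩ := ih (fun a ha => hu a (by omega))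
        (fun a ha => hw a (by omega)) h'
      refine ⟨a, by omega, ha2, fun b hb1 hb2 => ?_⟩
      rcases Nat.lt_or_ge b k with hb | hb
      · exact ha3 b hb1 hb
      · have : b = k := by omega
        rw [this]; exact heq
    · exfalso
      have h1 : key V k u < V ^ k := key_bound (fun a ha => hu a (by omega))
      have h2 : u k * V ^ k + V ^ k ≤ w k * V ^ k := by
        have h4 : (u k + 1) * V ^ k ≤ w k * V ^ k := Nat.mul_le_mul_right _ (by omega)
        have h5 : (u k + 1) * V ^ k = u k * V ^ k + V ^ k := by ring
        omega
      rw [key_succ, key_succ] at h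
      have h3 : 0 ≤ key V k w := Nat.zero_le _
      omega

lemma key_inj {V k : ℕ} {u w : ℕ → ℕ} (hu : ∀ a, a < k → u a < V)
    (hw : ∀ a, a < k → w a < V) (h : key V k w = key V k u) :
    ∀ a, a < k → w a = u a := by
  induction k with
  | zero => omega
  | succ k ih =>
    have hb1 : key V k u < V ^ k := key_bound (fun a ha => hu a (by omega))
    have hb2 : key V k w < V ^ k := key_bound (fun a ha => hw a (by omega))
    rw [key_succ, key_succ] at h
    have heq : w k = u k := by
      rcases lt_trichotomy (w k) (u k) with hlt | heq | hgt
      · exfalso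
        have h4 : (w k + 1) * V ^ k ≤ u k * V ^ k := Nat.mul_le_mul_right _ (by omega)
        have h5 : (w k + 1) * V ^ k = w k * V ^ k + V ^ k := by ring
        omega
      · exact heq
      · exfalso
        have h4 : (u k + 1) * V ^ k ≤ w k * V ^ k := Nat.mul_le_mul_right _ (by omega)
        have h5 : (u k + 1) * V ^ k = u k * V ^ k + V ^ k := by ring
        omega
    have h' : key V k w = key V k u := by
      rw [heq] at h; omega
    intro a ha
    rcases Nat.lt_or_ge a k with h2 | h2
    · exact ih (fun a ha => hu a (by omega)) (fun a ha => hw a (by omega)) h' a h2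
    · have : a = k := by omega
      rw [this]; exact heq

/-- existence of a revlex-maximal element in a finite set of standardized vectors -/
lemma exists_revlex_max {k : ℕ} (D : Finset (ℕ → ℕ)) (hne : D.Nonempty)
    (hstd : ∀ u ∈ D, ∀ a, k ≤ a → u a = 0) :
    ∃ u ∈ D, ∀ w ∈ D, w ≠ u →
      ∃ a, a < k ∧ w a < u a ∧ ∀ b, a < b → b < k → w b = u b := by
  obtain ⟨V, hbd⟩ : ∃ V : ℕ, ∀ u ∈ D, ∀ a, a < k → u a < V := by
    refine ⟨(∑ u ∈ D, ∑ a ∈ Finset.range k, u a) + 1, fun u hu a ha => ?_⟩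
    have h1 : u a ≤ ∑ a ∈ Finset.range k, u a :=
      Finset.single_le_sum (fun i _ => Nat.zero_le _) (Finset.mem_range.mpr ha)
    have h2 : (∑ a ∈ Finset.range k, u a) ≤ ∑ u ∈ D, ∑ a ∈ Finset.range k, u a :=
      Finset.single_le_sum (fun i _ => Nat.zero_le _) hu
    exact Nat.lt_succ_of_le (le_trans h1 h2)
  obtain ⟨u, hu, hmax⟩ := D.exists_max_image (key V k) hne
  refine ⟨u, hu, fun w hw hne' => ?_⟩
  have hle := hmax w hw
  have hneq : key V k w ≠ key V k u := by
    intro hkey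
    apply hne'
    have := key_inj (hbd u hu) (hbd w hw) hkey
    funext a
    rcases Nat.lt_or_ge a k with ha | ha
    · exact this a ha
    · rw [hstd w hw a ha, hstd u hu a ha]
  exact key_lt_aux (hbd u hu) (hbd w hw) (lt_of_le_of_ne hle hneq)




noncomputable def chunk (ν : ℕ → ℝ) (b : ℕ) (M : ℝ) : ℕ → ℝ :=
  fun v => if b < v then max 0 (min (ν v) (M - ∑ w ∈ Finset.Ioo b v, ν w)) else 0

lemma Ioo_succ (b t : ℕ) : Finset.Ioo b (t+1) = Finset.Ioc b t := by
  ext x; simp [Finset.mem_Ioo, Finset.mem_Ioc]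

lemma Ioo_insert (b v : ℕ) (h : b < v) : Finset.Ioo b (v+1) = insert v (Finset.Ioo b v) := by
  ext x; simp [Finset.mem_Ioo, Finset.mem_insert]; omega

lemma chunk_nonneg (ν b M v) : 0 ≤ chunk ν b M v := by
  unfold chunk; split <;> simp

lemma chunk_le (ν : ℕ → ℝ) (b : ℕ) (M : ℝ) (v : ℕ) (hν : 0 ≤ ν v) :
    chunk ν b M v ≤ ν v := by
  unfold chunk
  split
  · exact max_le hν (min_le_left _ _)
  · exact hν

lemma chunk_zero_le (ν b M v) (h : v ≤ b) : chunk ν b M v = 0 := by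
  unfold chunk; rw [if_neg (by omega)]

lemma chunk_sum (ν : ℕ → ℝ) (b : ℕ) (M : ℝ) (hν : ∀ v, 0 ≤ ν v) (hM : 0 ≤ M) :
    ∀ t, ∑ v ∈ Finset.Ioc b t, chunk ν b M v = min M (∑ v ∈ Finset.Ioc b t, ν v) := by
  intro t
  induction t with
  | zero =>
    have : Finset.Ioc b 0 = ∅ := by
      ext x; simp [Finset.mem_Ioc]
    simp [this, hM]
  | succ t ih =>
    rcases Nat.lt_or_ge t b with hb | hb
    · rcases Nat.lt_or_ge (t+1) (b+1) with hb2 | hb2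
      · have h1 : Finset.Ioc b (t+1) = ∅ := by ext x; simp [Finset.mem_Ioc]; omega
        simp [h1, hM]
      · have hbt : b = t := by omega
        have h1 : Finset.Ioc b (t+1) = {t+1} := by ext x; simp [Finset.mem_Ioc]; omega
        rw [h1]
        simp only [Finset.sum_singleton]
        unfold chunk
        rw [if_pos (by omega)]
        have h2 : Finset.Ioo b (t+1) = ∅ := by ext x; simp [Finset.mem_Ioo]; omega
        rw [h2]
        simp only [Finset.sum_empty, sub_zero]
        rw [min_comm, max_eq_right (le_min hM (hν _))]
    · have hsplit : Finset.Ioc b (t+1) = insert (t+1) (Finset.Ioc b t) := by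
        ext x; simp [Finset.mem_Ioc, Finset.mem_insert]; omega
      have hnm : (t+1) ∉ Finset.Ioc b t := by simp [Finset.mem_Ioc]
      rw [hsplit, Finset.sum_insert hnm, Finset.sum_insert hnm, ih]
      have hIoo : Finset.Ioo b (t+1) = Finset.Ioc b t := Ioo_succ b t
      unfold chunk
      rw [if_pos (by omega : b < t+1), hIoo]
      set A := ∑ v ∈ Finset.Ioc b t, ν v with hA
      have hA0 : 0 ≤ A := Finset.sum_nonneg fun v _ => hν v
      have hν0 := hν (t+1)
      rcases le_total M A with h | h
      · have hm1 : min (ν (t+1)) (M - A) ≤ 0 := le_trans (min_le_right _ _) (by linarith)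
        rw [max_eq_left hm1, min_eq_left h, min_eq_left (by linarith), zero_add]
      · rcases le_total (ν (t+1)) (M - A) with h2 | h2
        · rw [max_eq_right (le_min hν0 (by linarith)), min_eq_left h2, min_eq_right h,
            min_eq_right (by linarith)]
        · rw [max_eq_right (le_min (by linarith) (by linarith)), min_eq_right h2,
            min_eq_right h, min_eq_left (by linarith)]
          ring

lemma chunk_total (ν : ℕ → ℝ) (b N : ℕ) (M : ℝ) (hν : ∀ v, 0 ≤ ν v) (hM : 0 ≤ M)
    (h : M ≤ ∑ v ∈ Finset.Ioc b N, ν v) :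
    ∑ v ∈ Finset.Ioc b N, chunk ν b M v = M := by
  rw [chunk_sum ν b M hν hM N, min_eq_left h]

lemma chunk_zero_gt (ν : ℕ → ℝ) (b N : ℕ) (M : ℝ) (hν : ∀ v, 0 ≤ ν v)
    (h : M ≤ ∑ v ∈ Finset.Ioc b N, ν v) {v : ℕ} (hv : N < v) :
    chunk ν b M v = 0 := by
  unfold chunk
  split
  · have hsub : Finset.Ioc b N ⊆ Finset.Ioo b v := by
      intro x hx
      simp only [Finset.mem_Ioc] at hx
      simp only [Finset.mem_Ioo]
      omega
    have h2 : (∑ w ∈ Finset.Ioc b N, ν w) ≤ ∑ w ∈ Finset.Ioo b v, ν w :=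
      Finset.sum_le_sum_of_subset_of_nonneg hsub (fun i _ _ => hν i)
    have : min (ν v) (M - ∑ w ∈ Finset.Ioo b v, ν w) ≤ 0 :=
      le_trans (min_le_right _ _) (by linarith)
    rw [max_eq_left this]
  · rfl

lemma chunk_full (ν : ℕ → ℝ) (b : ℕ) (M : ℝ) (hν : ∀ v, 0 ≤ ν v)
    {v w : ℕ} (hbv : b < v) (hvw : v < w) (hw : chunk ν b M w ≠ 0) :
    chunk ν b M v = ν v := by
  have hbw : b < w := by omega
  have hlt : (∑ x ∈ Finset.Ioo b w, ν x) < M := by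
    by_contra hc
    push_neg at hc
    apply hw
    unfold chunk
    rw [if_pos hbw]
    have : min (ν w) (M - ∑ x ∈ Finset.Ioo b w, ν x) ≤ 0 :=
      le_trans (min_le_right _ _) (by linarith)
    rw [max_eq_left this]
  have hsub : Finset.Ioo b (v+1) ⊆ Finset.Ioo b w := by
    intro x hx; simp only [Finset.mem_Ioo] at *; omega
  have h2 : (∑ x ∈ Finset.Ioo b (v+1), ν x) ≤ ∑ x ∈ Finset.Ioo b w, ν x :=
    Finset.sum_le_sum_of_subset_of_nonneg hsub (fun i _ _ => hν i)
  have h3 : (∑ x ∈ Finset.Ioo b (v+1), ν x) = (∑ x ∈ Finset.Ioo b v, ν x) + ν v := by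
    rw [Ioo_insert b v hbv, Finset.sum_insert (by simp [Finset.mem_Ioo])]
    ring
  have h4 : ν v ≤ M - ∑ x ∈ Finset.Ioo b v, ν x := by linarith
  unfold chunk
  rw [if_pos hbv, min_eq_left h4, max_eq_right (hν v)]

/-- uniqueness of "initial chunks": two nonnegative subfunctions of `μ`, supported in
`(b, N]`, each "full below its top", with equal totals, must coincide. -/
lemma chunk_uniq_aux (μ F G : ℕ → ℝ) (b N : ℕ)
    (hF0 : ∀ v, 0 ≤ F v) (hG0 : ∀ v, 0 ≤ G v)
    (hGμ : ∀ v, G v ≤ μ v)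
    (hFz : ∀ v, v ≤ b → F v = 0) (hGz : ∀ v, v ≤ b → G v = 0)
    (hFN : ∀ v, N < v → F v = 0) (hGN : ∀ v, N < v → G v = 0)
    (hFfull : ∀ v w, b < v → v < w → F w ≠ 0 → F v = μ v)
    (htot : ∑ v ∈ Finset.Ioc b N, F v = ∑ v ∈ Finset.Ioc b N, G v)
    (v : ℕ) (ihv : ∀ w, w < v → F w = G w) (hlt : F v < G v) : False := by
  have hGv : 0 < G v := lt_of_le_of_lt (hF0 v) hlt
  have hbv : b < v := by
    by_contra hc; push_neg at hc
    rw [hGz v hc] at hGv; linarith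
  have hvN : v ≤ N := by
    by_contra hc; push_neg at hc
    rw [hGN v hc] at hGv; linarith
  -- split the sums at v
  have hsplit : ∀ H : ℕ → ℝ, ∑ x ∈ Finset.Ioc b N, H x =
      (∑ x ∈ Finset.Ioc b (v-1), H x) + H v + ∑ x ∈ Finset.Ioc v N, H x := by
    intro H
    have h1 : Finset.Ioc b N = Finset.Ioc b (v-1) ∪ Finset.Ioc (v-1) N := by
      ext x; simp [Finset.mem_Ioc, Finset.mem_union]; omega
    have hdisj : Disjoint (Finset.Ioc b (v-1)) (Finset.Ioc (v-1) N) := by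
      rw [Finset.disjoint_left]
      intro x hx1 hx2
      simp [Finset.mem_Ioc] at hx1 hx2; omega
    rw [h1, Finset.sum_union hdisj]
    have h2 : Finset.Ioc (v-1) N = insert v (Finset.Ioc v N) := by
      ext x; simp [Finset.mem_Ioc, Finset.mem_insert]; omega
    rw [h2, Finset.sum_insert (by simp [Finset.mem_Ioc])]
    ring
  have hFs := hsplit F
  have hGs := hsplit G
  have hlow : (∑ x ∈ Finset.Ioc b (v-1), F x) = ∑ x ∈ Finset.Ioc b (v-1), G x := by
    apply Finset.sum_congr rfl
    intro x hx
    simp only [Finset.mem_Ioc] at hx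
    exact ihv x (by omega)
  have hhigh : (∑ x ∈ Finset.Ioc v N, G x) < ∑ x ∈ Finset.Ioc v N, F x := by
    rw [hFs, hGs] at htot; linarith
  have hGlo : (0:ℝ) ≤ ∑ x ∈ Finset.Ioc v N, G x := Finset.sum_nonneg fun x _ => hG0 x
  obtain ⟨w, hw, hww⟩ := Finset.exists_lt_of_sum_lt hhigh
  simp only [Finset.mem_Ioc] at hw
  have hFw : F w ≠ 0 := by
    have := hG0 w; intro h; rw [h] at hww; linarith
  have h5 := hFfull v w hbv hw.1 hFw
  have h6 := hGμ v
  linarith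

lemma chunk_uniq (μ F G : ℕ → ℝ) (b N : ℕ)
    (hF0 : ∀ v, 0 ≤ F v) (hG0 : ∀ v, 0 ≤ G v)
    (hFμ : ∀ v, F v ≤ μ v) (hGμ : ∀ v, G v ≤ μ v)
    (hFz : ∀ v, v ≤ b → F v = 0) (hGz : ∀ v, v ≤ b → G v = 0)
    (hFN : ∀ v, N < v → F v = 0) (hGN : ∀ v, N < v → G v = 0)
    (hFfull : ∀ v w, b < v → v < w → F w ≠ 0 → F v = μ v)
    (hGfull : ∀ v w, b < v → v < w → G w ≠ 0 → G v = μ v)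
    (htot : ∑ v ∈ Finset.Ioc b N, F v = ∑ v ∈ Finset.Ioc b N, G v) :
    ∀ v, F v = G v := by
  intro v
  induction v using Nat.strong_induction_on with
  | _ v ihv =>
    rcases lt_trichotomy (F v) (G v) with h | h | h
    · exact absurd (chunk_uniq_aux μ F G b N hF0 hG0 hGμ hFz hGz hFN hGN hFfull htot v ihv h)
        not_false
    · exact h
    · exact absurd (chunk_uniq_aux μ G F b N hG0 hF0 hFμ hGz hFz hGN hFN hGfull htot.symm v
        (fun w hw => (ihv w hw).symm) h) not_false

end
end NCwork
namespace NCwork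
noncomputable section
local instance : DecidableEq (ℕ → ℕ) := fun f g => Classical.propDecidable _
local instance : DecidableEq ℝ := fun a b => Classical.propDecidable _

lemma nc_symm {k : ℕ} {I J : ℕ → ℕ} (h : NC k I J) : NC k J I := by
  intro a b hab hb hmid hc
  exact h a b hab hb (fun l h1 h2 => (hmid l h1 h2).symm) (cross_symm.mp hc)

lemma mar_erase {B : Finset (ℕ → ℕ)} {β : (ℕ → ℕ) → ℝ} {u : ℕ → ℕ} (hu : u ∈ B)
    (a v : ℕ) :
    mar B β a v = mar (B.erase u) β a v + (if u a = v then β u else 0) := by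
  unfold mar
  rw [Finset.filter_erase]
  rcases Classical.em (u a = v) with h | h
  · rw [if_pos h]
    have hmem : u ∈ B.filter (fun I => I a = v) := Finset.mem_filter.mpr ⟨hu, h⟩
    rw [Finset.sum_erase_eq_sub hmem]
    ring
  · rw [if_neg h, Finset.erase_eq_of_notMem (by
      intro hmem
      exact h (Finset.mem_filter.mp hmem).2), add_zero]

/-- sum of β over elements of B with `c ≤ u k` -/
lemma sum_filter_erase {B : Finset (ℕ → ℕ)} {β : (ℕ → ℕ) → ℝ} {u : ℕ → ℕ}
    (hu : u ∈ B) (P : (ℕ → ℕ) → Prop) [DecidablePred P] (hP : P u) :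
    ∑ w ∈ (B.erase u).filter (fun w => P w), β w
      = (∑ w ∈ B.filter (fun w => P w), β w) - β u := by
  rw [Finset.filter_erase, Finset.sum_erase_eq_sub (Finset.mem_filter.mpr ⟨hu, hP⟩)]

theorem ext_lemma : ∀ (N : ℕ) (k : ℕ) (B : Finset (ℕ → ℕ)) (β : (ℕ → ℕ) → ℝ)
    (ν : ℕ → ℝ) (Nb : ℕ),
    B.card ≤ N → Goodk (k+1) B β →
    (∀ v, 0 ≤ ν v) → (∀ v, Nb < v → ν v = 0) → (ν 0 = 0) →
    (∀ c, (∑ u ∈ B.filter (fun u => c ≤ u k), β u) ≤ ∑ v ∈ Finset.Ioc c Nb, ν v) →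
    ((∑ u ∈ B, β u) = ∑ v ∈ Finset.Ioc 0 Nb, ν v) →
    ∃ S α, Goodk (k+2) S α ∧
      (∀ t ∈ S, picore (k+1) t ∈ B) ∧
      (∀ a v, a < k+1 → mar S α a v = mar B β a v) ∧
      (∀ v, mar S α (k+1) v = ν v) := by
  intro N
  induction N with
  | zero =>
    intro k B β ν Nb hcard hgood hν0 hνN hν00 hinv htot
    have hB : B = ∅ := Finset.card_eq_zero.mp (by omega)
    subst hB
    refine ⟨∅, fun _ => 0, ?_, ?_, ?_, ?_⟩
    · exact ⟨⟨fun I hI => absurd hI (Finset.notMem_empty I),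
        fun I hI => absurd hI (Finset.notMem_empty I),
        fun I hI => absurd hI (Finset.notMem_empty I)⟩,
        fun I hI => absurd hI (Finset.notMem_empty I)⟩
    · intro t ht; exact absurd ht (Finset.notMem_empty t)
    · intro a v _
      unfold mar; simp
    · intro v
      unfold mar
      simp only [Finset.filter_empty, Finset.sum_empty]
      symm
      rcases Nat.lt_or_ge Nb v with h | h
      · rcases Nat.eq_zero_or_pos v with h0 | h0
        · rw [h0]; exact hν00
        · exact hνN v h
      · rcases Nat.eq_zero_or_pos v with h0 | h0
        · rw [h0]; exact hν00
        · have := Finset.sum_eq_zero_iff_of_nonneg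
            (fun w (_ : w ∈ Finset.Ioc 0 Nb) => hν0 w)
          rw [Finset.sum_empty] at htot
          exact (this.mp htot.symm) v (Finset.mem_Ioc.mpr ⟨h0, h⟩)
  | succ N ihN =>
    intro k B β ν Nb hcard hgood hν0 hνN hν00 hinv htot
    rcases Finset.eq_empty_or_nonempty B with hB | hBne
    · exact ihN k B β ν Nb (by rw [hB]; simp) hgood hν0 hνN hν00 hinv htot
    obtain ⟨ustar, hustar, hrevlex⟩ := exists_revlex_max (k := k+1) B hBne hgood.1.2.1
    obtain ⟨⟨hBsm, hBstd, hBpos⟩, hBnc⟩ := hgood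
    set b := ustar k with hbdef
    set M := β ustar with hMdef
    have hM : 0 < M := hBpos ustar hustar
    have hkmax : ∀ w ∈ B, w k ≤ ustar k := by
      intro w hw
      rcases Classical.em (w = ustar) with h | h
      · rw [h]
      · obtain ⟨a, ha1, ha2, ha3⟩ := hrevlex w hw h
        rcases Nat.lt_or_ge a k with hak | hak
        · rw [ha3 k hak (by omega)]
        · have hak' : a = k := by omega
          rw [hak'] at ha2
          omega
    -- feasibility
    have hfeas : M ≤ ∑ v ∈ Finset.Ioc b Nb, ν v := by
      refine le_trans ?_ (hinv b)
      apply Finset.single_le_sum (f := β)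
        (fun w hw => le_of_lt (hBpos w (Finset.mem_filter.mp hw).1))
      exact Finset.mem_filter.mpr ⟨hustar, le_refl b⟩
    have hbNb : b ≤ Nb := by
      by_contra hc
      push_neg at hc
      rw [Finset.Ioc_eq_empty (by omega), Finset.sum_empty] at hfeas
      linarith
    set F := chunk ν b M with hFdef
    have hF0 : ∀ v, 0 ≤ F v := fun v => chunk_nonneg ν b M v
    have hFle : ∀ v, F v ≤ ν v := fun v => chunk_le ν b M v (hν0 v)
    have hFz : ∀ v, v ≤ b → F v = 0 := fun v hv => chunk_zero_le ν b M v hv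
    have hFN : ∀ v, Nb < v → F v = 0 := fun v hv => chunk_zero_gt ν b Nb M hν0 hfeas hv
    have hFtot : ∑ v ∈ Finset.Ioc b Nb, F v = M :=
      chunk_total ν b Nb M hν0 (le_of_lt hM) hfeas
    have hFtot' : ∀ c, c ≤ b → ∑ v ∈ Finset.Ioc c Nb, F v = M := by
      intro c hc
      rw [← Finset.sum_Ioc_consecutive (fun v => F v) hc hbNb]
      have h1 : ∑ v ∈ Finset.Ioc c b, F v = 0 :=
        Finset.sum_eq_zero fun v hv => hFz v (Finset.mem_Ioc.mp hv).2
      rw [h1, hFtot, zero_add]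
    set B' := B.erase ustar with hB'def
    set nu' := fun v => ν v - F v with hnu'def
    have hcard' : B'.card ≤ N := by
      rw [hB'def, Finset.card_erase_of_mem hustar]
      omega
    have hgood' : Goodk (k+1) B' β :=
      goodk_subset ⟨⟨hBsm, hBstd, hBpos⟩, hBnc⟩ (Finset.erase_subset _ _)
    have hnu'0 : ∀ v, 0 ≤ nu' v := fun v => by
      simp only [hnu'def]; linarith [hFle v]
    have hnu'N : ∀ v, Nb < v → nu' v = 0 := fun v hv => by
      simp only [hnu'def]; rw [hνN v hv, hFN v hv]; ring
    have hnu'00 : nu' 0 = 0 := by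
      simp only [hnu'def]; rw [hν00, hFz 0 (by omega)]; ring
    have hinv' : ∀ c, (∑ u ∈ B'.filter (fun u => c ≤ u k), β u)
        ≤ ∑ v ∈ Finset.Ioc c Nb, nu' v := by
      intro c
      have hsq : ∑ v ∈ Finset.Ioc c Nb, nu' v
          = (∑ v ∈ Finset.Ioc c Nb, ν v) - ∑ v ∈ Finset.Ioc c Nb, F v := by
        simp only [hnu'def]; rw [Finset.sum_sub_distrib]
      rcases Nat.lt_or_ge b c with hbc | hbc
      · have hempty : B'.filter (fun u => c ≤ u k) = ∅ := by
          apply Finset.filter_eq_empty_iff.mpr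
          intro u hu
          have := hkmax u (Finset.mem_of_mem_erase hu)
          omega
        rw [hempty, Finset.sum_empty]
        exact Finset.sum_nonneg fun v _ => hnu'0 v
      · have hfe : ∑ u ∈ B'.filter (fun u => c ≤ u k), β u
            = (∑ u ∈ B.filter (fun u => c ≤ u k), β u) - β ustar := by
          rw [hB'def]
          exact sum_filter_erase hustar (fun u => c ≤ u k) (show c ≤ ustar k by omega)
        rw [hfe, hsq, hFtot' c hbc]
        linarith [hinv c]
    have htot' : (∑ u ∈ B', β u) = ∑ v ∈ Finset.Ioc 0 Nb, nu' v := by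
      have h1 : ∑ v ∈ Finset.Ioc 0 Nb, nu' v
          = (∑ v ∈ Finset.Ioc 0 Nb, ν v) - ∑ v ∈ Finset.Ioc 0 Nb, F v := by
        simp only [hnu'def]; rw [Finset.sum_sub_distrib]
      rw [hB'def, Finset.sum_erase_eq_sub hustar, h1, hFtot' 0 (by omega), htot]
    obtain ⟨S₂, α₂, hS₂good, hS₂pi, hS₂mar, hS₂last⟩ :=
      ihN k B' β nu' Nb hcard' hgood' hnu'0 hnu'N hnu'00 hinv' htot'
    -- the new fiber over ustar
    set Fsupp := (Finset.Ioc b Nb).filter (fun v => F v ≠ 0) with hFsuppdef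
    set fiber := Fsupp.image (snocc (k+1) ustar) with hfiberdef
    set S := S₂ ∪ fiber with hSdef
    set α := fun t => if picore (k+1) t = ustar then F (t (k+1)) else α₂ t with hαdef
    have hustd : Std (k+1) ustar := hBstd ustar hustar
    have husm : SM (k+1) ustar := hBsm ustar hustar
    have hsnocc_pi : ∀ v, picore (k+1) (snocc (k+1) ustar v) = ustar :=
      fun v => snocc_picore (k+1) ustar v hustd
    have hsnocc_inj : Set.InjOn (snocc (k+1) ustar) Fsupp := by
      intro v1 _ v2 _ h
      have := congrFun h (k+1)
      rwa [snocc_eval_k, snocc_eval_k] at this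
    have hfiber_elem : ∀ t ∈ fiber, t = snocc (k+1) ustar (t (k+1))
        ∧ F (t (k+1)) ≠ 0 ∧ b < t (k+1) ∧ t (k+1) ≤ Nb := by
      intro t ht
      obtain ⟨v, hv, rfl⟩ := Finset.mem_image.mp ht
      rw [snocc_eval_k]
      have hv2 := Finset.mem_filter.mp hv
      have hv3 := Finset.mem_Ioc.mp hv2.1
      exact ⟨rfl, hv2.2, hv3.1, hv3.2⟩
    have hS₂ne : ∀ t ∈ S₂, picore (k+1) t ≠ ustar := by
      intro t ht
      have := hS₂pi t ht
      rw [hB'def] at this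
      exact fun h => (Finset.mem_erase.mp this).1 (by rw [← h])
    have hdisj : Disjoint S₂ fiber := by
      rw [Finset.disjoint_right]
      intro t htf hts
      obtain ⟨ht1, _, _, _⟩ := hfiber_elem t htf
      apply hS₂ne t hts
      rw [ht1]
      exact hsnocc_pi _
    have hαfiber : ∀ t ∈ fiber, α t = F (t (k+1)) := by
      intro t ht
      obtain ⟨ht1, _, _, _⟩ := hfiber_elem t ht
      simp only [hαdef]
      rw [if_pos (by rw [ht1]; exact hsnocc_pi _)]
    have hαS₂ : ∀ t ∈ S₂, α t = α₂ t := by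
      intro t ht
      simp only [hαdef]
      rw [if_neg (hS₂ne t ht)]
    -- margins of the fiber
    have hmarfiber_lt : ∀ a v, a < k+1 →
        mar fiber α a v = if ustar a = v then M else 0 := by
      intro a v ha
      unfold mar
      rcases Classical.em (ustar a = v) with h | h
      · rw [if_pos h]
        have hfil : fiber.filter (fun I => I a = v) = fiber := by
          apply Finset.filter_true_of_mem
          intro t ht
          obtain ⟨ht1, _, _, _⟩ := hfiber_elem t ht
          rw [ht1, snocc_eval_lt ha, h]
        rw [hfil, hfiberdef, Finset.sum_image (fun x hx y hy hxy => hsnocc_inj hx hy hxy)]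
        have : ∀ v' ∈ Fsupp, α (snocc (k+1) ustar v') = F v' := by
          intro v' hv'
          have hmem : snocc (k+1) ustar v' ∈ fiber := by
            rw [hfiberdef]; exact Finset.mem_image_of_mem _ hv'
          rw [hαfiber _ hmem, snocc_eval_k]
        rw [Finset.sum_congr rfl this, hFsuppdef, Finset.sum_filter_ne_zero, hFtot]
      · rw [if_neg h]
        apply Finset.sum_eq_zero
        intro t ht
        have ht2 := Finset.mem_filter.mp ht
        obtain ⟨ht1, _, _, _⟩ := hfiber_elem t ht2.1
        exfalso
        apply h
        rw [← ht2.2, ht1, snocc_eval_lt ha]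
    have hmarfiber_last : ∀ v, mar fiber α (k+1) v = F v := by
      intro v
      unfold mar
      rcases Classical.em (F v = 0) with h | h
      · rw [h]
        apply Finset.sum_eq_zero
        intro t ht
        have ht2 := Finset.mem_filter.mp ht
        obtain ⟨ht1, hne, _, _⟩ := hfiber_elem t ht2.1
        exfalso
        apply hne
        rw [ht2.2, h]
      · have hvF : v ∈ Fsupp := by
          rw [hFsuppdef]
          refine Finset.mem_filter.mpr ⟨Finset.mem_Ioc.mpr ⟨?_, ?_⟩, h⟩
          · by_contra hc; push_neg at hc; exact h (hFz v hc)
          · by_contra hc; push_neg at hc; exact h (hFN v hc)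
        have hfil : fiber.filter (fun I => I (k+1) = v) = {snocc (k+1) ustar v} := by
          ext t
          simp only [Finset.mem_filter, Finset.mem_singleton]
          constructor
          · rintro ⟨ht, htv⟩
            obtain ⟨ht1, _, _, _⟩ := hfiber_elem t ht
            rw [ht1, htv]
          · rintro rfl
            refine ⟨?_, snocc_eval_k _ _ _⟩
            rw [hfiberdef]
            exact Finset.mem_image_of_mem _ hvF
        rw [hfil, Finset.sum_singleton, hαfiber _ (by
          rw [hfiberdef]; exact Finset.mem_image_of_mem _ hvF), snocc_eval_k]
    have main_arg : ∀ t ∈ fiber, ∀ s ∈ S₂, NC (k+2) t s := by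
      intro t htf s hsS
      obtain ⟨ht1, htF, htb, htNb⟩ := hfiber_elem t htf
      have hwB' : picore (k+1) s ∈ B' := hS₂pi s hsS
      have hwB : picore (k+1) s ∈ B := Finset.mem_of_mem_erase hwB'
      have hwne : picore (k+1) s ≠ ustar := (Finset.mem_erase.mp hwB').1
      obtain ⟨a₀, ha₀1, ha₀2, ha₀3⟩ := hrevlex (picore (k+1) s) hwB hwne
      have hsw : ∀ l, l < k+1 → picore (k+1) s l = s l := fun l hl => picore_eval_lt hl
      have htu : ∀ l, l < k+1 → t l = ustar l := by
        intro l hl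
        rw [ht1, snocc_eval_lt hl]
      intro a bb hab hbb hmid hcross
      rcases Nat.lt_or_ge bb (k+1) with hbk | hbk
      · have hnc := hBnc ustar hustar (picore (k+1) s) hwB (Ne.symm hwne)
        apply hnc a bb hab hbk
        · intro l hl1 hl2
          rw [hsw l (by omega), ← htu l (by omega)]
          exact hmid l hl1 hl2
        · rw [← htu a (by omega), ← htu bb hbk, hsw a (by omega), hsw bb hbk]
          exact hcross
      · have hbb1 : bb = k+1 := by omega
        have hak : a < k+1 := by omega
        rcases lt_trichotomy a a₀ with hcmp | hcmp | hcmp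
        · have h1 := hmid a₀ hcmp (by omega)
          rw [htu a₀ ha₀1] at h1
          rw [hsw a₀ ha₀1] at ha₀2
          omega
        · subst hcmp
          have hta : t a = ustar a := htu a hak
          have hsa : s a = picore (k+1) s a := (hsw a hak).symm
          rcases hcross with ⟨hc1, hc2, hc3⟩ | ⟨hc1, hc2, hc3⟩
          · rw [hta, hsa] at hc1
            omega
          · -- s a < t a, t a < s bb, s bb < t bb
            rw [hbb1] at hc2 hc3
            have hby : b < s (k+1) := by
              rcases Nat.lt_or_ge a k with hak2 | hak2
              · have hsk : s k = ustar k := by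
                  rw [← hsw k (by omega)]
                  exact ha₀3 k hak2 (by omega)
                have := hS₂good.1.1 s hsS k (k+1) (by omega) (by omega)
                omega
              · have haeq : a = k := by omega
                rw [haeq, htu k (by omega)] at hc2
                exact hc2
            have hyv : s (k+1) < t (k+1) := hc3
            have hFfull : F (s (k+1)) = ν (s (k+1)) :=
              chunk_full ν b M hν0 hby hyv htF
            have hnu'y : nu' (s (k+1)) = 0 := by
              simp only [hnu'def]
              rw [hFfull]; ring
            have hmarpos : α₂ s ≤ mar S₂ α₂ (k+1) (s (k+1)) :=
              mem_mar_le hS₂good.1.2.2 hsS rfl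
            rw [hS₂last (s (k+1)), hnu'y] at hmarpos
            linarith [hS₂good.1.2.2 s hsS]
        · have h1 := ha₀3 a hcmp hak
          rw [hsw a hak] at h1
          have hta : t a = s a := by rw [htu a hak, ← h1]
          rcases hcross with ⟨hc1, _, _⟩ | ⟨hc1, _, _⟩ <;> omega
    -- conclude
    refine ⟨S, α, ?_, ?_, ?_, ?_⟩
    · -- Goodk
      refine ⟨⟨?_, ?_, ?_⟩, ?_⟩
      · intro t ht
        rcases Finset.mem_union.mp ht with h | h
        · exact hS₂good.1.1 t h
        · obtain ⟨ht1, _, hlt, _⟩ := hfiber_elem t h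
          rw [ht1]
          apply snocc_sm (by omega) husm
          simpa using hlt
      · intro t ht
        rcases Finset.mem_union.mp ht with h | h
        · exact hS₂good.1.2.1 t h
        · obtain ⟨ht1, _, _, _⟩ := hfiber_elem t h
          rw [ht1]
          exact snocc_std _ _ _
      · intro t ht
        rcases Finset.mem_union.mp ht with h | h
        · rw [hαS₂ t h]; exact hS₂good.1.2.2 t h
        · obtain ⟨_, hne, _, _⟩ := hfiber_elem t h
          rw [hαfiber t h]
          exact lt_of_le_of_ne (hF0 _) (Ne.symm hne)
      · -- pairwise noncrossing
        intro t ht s hs hne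
        rcases Finset.mem_union.mp ht with h1 | h1 <;>
          rcases Finset.mem_union.mp hs with h2 | h2
        · exact hS₂good.2 t h1 s h2 hne
        · -- t ∈ S₂, s ∈ fiber : use symmetry of the main argument
          exact nc_symm (main_arg s h2 t h1)
        · exact main_arg t h1 s h2
        · -- both in fiber
          intro a bb hab hbb hmid hcross
          obtain ⟨ht1, _, _, _⟩ := hfiber_elem t h1
          obtain ⟨hs1, _, _, _⟩ := hfiber_elem s h2
          have hta : t a = s a := by
            rw [ht1, hs1, snocc_eval_lt (show a < k+1 by omega),
              snocc_eval_lt (show a < k+1 by omega)]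
          rcases hcross with ⟨hc1, _, _⟩ | ⟨hc1, _, _⟩ <;> omega
    · intro t ht
      rcases Finset.mem_union.mp ht with h | h
      · exact Finset.mem_of_mem_erase (by rw [← hB'def]; exact hS₂pi t h)
      · obtain ⟨ht1, _, _, _⟩ := hfiber_elem t h
        rw [ht1, hsnocc_pi]
        exact hustar
    · intro a v ha
      rw [hSdef, mar_union hdisj, hmarfiber_lt a v ha]
      have h1 : mar S₂ α a v = mar S₂ α₂ a v := by
        unfold mar
        apply Finset.sum_congr rfl
        intro t ht
        exact hαS₂ t (Finset.mem_filter.mp ht).1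
      rw [h1, hS₂mar a v ha, mar_erase hustar a v, ← hB'def, ← hMdef]
    · intro v
      rw [hSdef, mar_union hdisj, hmarfiber_last v]
      have h1 : mar S₂ α (k+1) v = mar S₂ α₂ (k+1) v := by
        unfold mar
        apply Finset.sum_congr rfl
        intro t ht
        exact hαS₂ t (Finset.mem_filter.mp ht).1
      rw [h1, hS₂last v]
      simp only [hnu'def]
      ring

end
end NCwork
namespace NCwork
noncomputable section
local instance : DecidableEq (ℕ → ℕ) := fun f g => Classical.propDecidable _
local instance : DecidableEq ℝ := fun a b => Classical.propDecidable _

lemma std_ext {k : ℕ} {I J : ℕ → ℕ} (hI : Std k I) (hJ : Std k J)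
    (h : ∀ a, a < k → I a = J a) : I = J := by
  funext a
  rcases Nat.lt_or_ge a k with ha | ha
  · exact h a ha
  · rw [hI a ha, hJ a ha]

lemma sum_mar_eq_total (T : Finset (ℕ → ℕ)) (γ : (ℕ → ℕ) → ℝ) (a : ℕ) (R : Finset ℕ)
    (h : ∀ t ∈ T, t a ∈ R) : ∑ v ∈ R, mar T γ a v = ∑ t ∈ T, γ t := by
  unfold mar
  exact Finset.sum_fiberwise_of_maps_to h γ

lemma mar_const_coord (T : Finset (ℕ → ℕ)) (γ : (ℕ → ℕ) → ℝ) (a v u0 : ℕ)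
    (h : ∀ t ∈ T, t a = u0) :
    mar T γ a v = if u0 = v then ∑ t ∈ T, γ t else 0 := by
  unfold mar
  rcases Classical.em (u0 = v) with hc | hc
  · rw [if_pos hc, Finset.filter_true_of_mem (fun t ht => by rw [h t ht, hc])]
  · rw [if_neg hc]
    apply Finset.sum_eq_zero
    intro t ht
    exact absurd ((h t (Finset.mem_filter.mp ht).1) ▸ (Finset.mem_filter.mp ht).2) hc

theorem core_uniq : ∀ (k N : ℕ) (S S' : Finset (ℕ → ℕ)) (α α' : (ℕ → ℕ) → ℝ),
    S.card ≤ N → Goodk (k+1) S α → Goodk (k+1) S' α' →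
    (∀ a v, a < k+1 → mar S α a v = mar S' α' a v) →
    S = S' ∧ ∀ I ∈ S, α I = α' I := by
  intro k
  induction k with
  | zero =>
    intro N S S' α α' hcard hg hg' hmar
    have key : ∀ (T : Finset (ℕ → ℕ)) (γ : (ℕ → ℕ) → ℝ), Goodk 1 T γ →
        ∀ I ∈ T, mar T γ 0 (I 0) = γ I := by
      intro T γ hgT I hI
      unfold mar
      have hfil : T.filter (fun J => J 0 = I 0) = {I} := by
        ext J
        simp only [Finset.mem_filter, Finset.mem_singleton]
        constructor
        · rintro ⟨hJ, hJ0⟩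
          exact std_ext (hgT.1.2.1 J hJ) (hgT.1.2.1 I hI)
            (fun a ha => by interval_cases a; exact hJ0)
        · rintro rfl
          exact ⟨hI, rfl⟩
      rw [hfil, Finset.sum_singleton]
    have hsub : ∀ (T T' : Finset (ℕ → ℕ)) (γ γ' : (ℕ → ℕ) → ℝ), Goodk 1 T γ →
        Goodk 1 T' γ' → (∀ a v, a < 1 → mar T γ a v = mar T' γ' a v) → T ⊆ T' := by
      intro T T' γ γ' hgT hgT' hm I hI
      have h1 : mar T' γ' 0 (I 0) = γ I := by
        rw [← hm 0 (I 0) (by omega)]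
        exact key T γ hgT I hI
      have h2 : mar T' γ' 0 (I 0) ≠ 0 := by
        rw [h1]; exact ne_of_gt (hgT.1.2.2 I hI)
      obtain ⟨J, hJ, hJ0⟩ := mar_pos_elem h2
      have : J = I := std_ext (hgT'.1.2.1 J hJ) (hgT.1.2.1 I hI)
        (fun a ha => by interval_cases a; exact hJ0)
      rwa [← this]
    have hSS' : S = S' := Finset.Subset.antisymm
      (hsub S S' α α' hg hg' hmar)
      (hsub S' S α' α hg' hg (fun a v ha => (hmar a v ha).symm))
    refine ⟨hSS', fun I hI => ?_⟩
    rw [← key S α hg I hI, hmar 0 (I 0) (by omega), key S' α' hg' I (hSS' ▸ hI)]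
  | succ k ihk =>
    intro N
    induction N with
    | zero =>
      intro S S' α α' hcard hg hg' hmar
      have hS : S = ∅ := Finset.card_eq_zero.mp (by omega)
      subst hS
      have hS' : S' = ∅ := by
        rw [Finset.eq_empty_iff_forall_notMem]
        intro I hI
        have h1 : α' I ≤ mar S' α' 0 (I 0) := mem_mar_le hg'.1.2.2 hI rfl
        have h2 : mar (∅ : Finset (ℕ → ℕ)) α 0 (I 0) = 0 := by
          unfold mar; simp
        rw [← hmar 0 (I 0) (by omega), h2] at h1
        linarith [hg'.1.2.2 I hI]
      exact ⟨hS'.symm, fun I hI => absurd hI (Finset.notMem_empty I)⟩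
    | succ N ihN =>
      intro S S' α α' hcard hg hg' hmar
      rcases Finset.eq_empty_or_nonempty S with hS | hSne
      · subst hS
        have hS' : S' = ∅ := by
          rw [Finset.eq_empty_iff_forall_notMem]
          intro I hI
          have h1 : α' I ≤ mar S' α' 0 (I 0) := mem_mar_le hg'.1.2.2 hI rfl
          have h2 : mar (∅ : Finset (ℕ → ℕ)) α 0 (I 0) = 0 := by
            unfold mar; simp
          rw [← hmar 0 (I 0) (by omega), h2] at h1
          linarith [hg'.1.2.2 I hI]
        exact ⟨hS'.symm, fun I hI => absurd hI (Finset.notMem_empty I)⟩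
      -- project to the first k+1 coordinates
      have hP := goodk_proj (k := k+1) hg
      have hP' := goodk_proj (k := k+1) hg'
      have hmarP : ∀ a v, a < k+1 →
          mar (S.image (picore (k+1))) (palpha S α (k+1)) a v
          = mar (S'.image (picore (k+1))) (palpha S' α' (k+1)) a v := by
        intro a v ha
        rw [mar_proj S α (k+1) a v ha, mar_proj S' α' (k+1) a v ha]
        exact hmar a v (by omega)
      obtain ⟨hPeq, hPα⟩ := ihk (S.image (picore (k+1))).card
        (S.image (picore (k+1))) (S'.image (picore (k+1)))
        (palpha S α (k+1)) (palpha S' α' (k+1)) le_rfl hP hP' hmarP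
      -- revlex max of the projection
      have hPne : (S.image (picore (k+1))).Nonempty := hSne.image _
      obtain ⟨ustar, hustar, hrevlex⟩ :=
        exists_revlex_max (k := k+1) (S.image (picore (k+1))) hPne hP.1.2.1
      have husm : SM (k+1) ustar := hP.1.1 ustar hustar
      have hustd : Std (k+1) ustar := hP.1.2.1 ustar hustar
      set b := ustar k with hbdef
      obtain ⟨Nv, hNv⟩ : ∃ Nv, ∀ t ∈ S ∪ S', t (k+1) ≤ Nv :=
        ⟨(S ∪ S').sup (fun t => t (k+1)), fun t ht => Finset.le_sup (f := fun t => t (k+1)) ht⟩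
      -- the two fibers over ustar
      set fibS := S.filter (fun t => picore (k+1) t = ustar) with hfibSdef
      set fibS' := S'.filter (fun t => picore (k+1) t = ustar) with hfibS'def
      set F := fun v => mar fibS α (k+1) v with hFdef
      set G := fun v => mar fibS' α' (k+1) v with hGdef
      set μ := fun v => mar S α (k+1) v with hμdef
      -- generic facts about a fiber
      have fiber_facts : ∀ (T : Finset (ℕ → ℕ)) (γ : (ℕ → ℕ) → ℝ), Goodk (k+2) T γ →
          ∀ t ∈ T.filter (fun t => picore (k+1) t = ustar),
          (∀ l, l < k+1 → t l = ustar l) ∧ b < t (k+1) := by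
        intro T γ hgT t ht
        have ht1 := (Finset.mem_filter.mp ht).1
        have ht2 := (Finset.mem_filter.mp ht).2
        have hl : ∀ l, l < k+1 → t l = ustar l := by
          intro l hl
          rw [← ht2, picore_eval_lt hl]
        refine ⟨hl, ?_⟩
        have := hgT.1.1 t ht1 k (k+1) (by omega) (by omega)
        rw [hl k (by omega)] at this
        exact this
      -- claim A : no "other" mass strictly inside the fiber's range
      have claimA : ∀ (T : Finset (ℕ → ℕ)) (γ : (ℕ → ℕ) → ℝ), Goodk (k+2) T γ →
          (T.image (picore (k+1)) = S.image (picore (k+1))) →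
          ∀ v w0, b < v → v < w0 →
          mar (T.filter (fun t => picore (k+1) t = ustar)) γ (k+1) w0 ≠ 0 →
          ∀ s ∈ T, picore (k+1) s ≠ ustar → s (k+1) ≠ v := by
        intro T γ hgT hTim v w0 hbv hvw hw0 s hs hspi hsv
        obtain ⟨tw, htw, htwv⟩ := mar_pos_elem hw0
        have htwT := (Finset.mem_filter.mp htw).1
        have htwfacts := fiber_facts T γ hgT tw htw
        have hwim : picore (k+1) s ∈ S.image (picore (k+1)) := by
          rw [← hTim]
          exact Finset.mem_image_of_mem _ hs
        obtain ⟨a₀, ha₀1, ha₀2, ha₀3⟩ := hrevlex (picore (k+1) s) hwim hspi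
        have hsne : s ≠ tw := by
          intro h
          apply hspi
          rw [h]
          exact (Finset.mem_filter.mp htw).2
        have hnc := hgT.2 s hs tw htwT hsne
        apply hnc a₀ (k+1) (by omega) (by omega)
        · intro l hl1 hl2
          have hlk : l < k+1 := by omega
          rw [(htwfacts.1 l hlk), ← ha₀3 l hl1 hlk, picore_eval_lt hlk]
        · left
          refine ⟨?_, ?_, ?_⟩
          · have := ha₀2
            rw [picore_eval_lt ha₀1] at this
            rw [htwfacts.1 a₀ ha₀1]
            exact this
          · rw [hsv]
            rcases Nat.lt_or_ge a₀ k with hak | hak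
            · rw [htwfacts.1 a₀ ha₀1]
              have := husm a₀ k hak (by omega)
              omega
            · have : a₀ = k := by omega
              rw [this, htwfacts.1 k (by omega)]
              exact hbv
          · rw [hsv, htwv]
            exact hvw
      -- chunk-uniqueness hypotheses
      have hF0 : ∀ v, 0 ≤ F v :=
        fun v => mar_nonneg (fun I hI => hg.1.2.2 I (Finset.mem_filter.mp hI).1)
      have hG0 : ∀ v, 0 ≤ G v :=
        fun v => mar_nonneg (fun I hI => hg'.1.2.2 I (Finset.mem_filter.mp hI).1)
      have hrestS : ∀ v, 0 ≤ mar (S.filter (fun t => picore (k+1) t ≠ ustar)) α (k+1) v :=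
        fun v => mar_nonneg (fun I hI => hg.1.2.2 I (Finset.mem_filter.mp hI).1)
      have hrestS' : ∀ v, 0 ≤ mar (S'.filter (fun t => picore (k+1) t ≠ ustar)) α' (k+1) v :=
        fun v => mar_nonneg (fun I hI => hg'.1.2.2 I (Finset.mem_filter.mp hI).1)
      have hdecS : ∀ a v, mar S α a v = mar fibS α a v
          + mar (S.filter (fun t => picore (k+1) t ≠ ustar)) α a v :=
        fun a v => mar_filter_ne ustar a v
      have hdecS' : ∀ a v, mar S' α' a v = mar fibS' α' a v
          + mar (S'.filter (fun t => picore (k+1) t ≠ ustar)) α' a v :=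
        fun a v => mar_filter_ne ustar a v
      have hμ' : ∀ v, μ v = mar S' α' (k+1) v := fun v => hmar (k+1) v (by omega)
      have hFμ : ∀ v, F v ≤ μ v := by
        intro v
        have h1 := hdecS (k+1) v
        have h2 := hrestS v
        simp only [hμdef, hFdef]
        linarith
      have hGμ : ∀ v, G v ≤ μ v := by
        intro v
        have h1 := hdecS' (k+1) v
        have h2 := hrestS' v
        have h3 := hμ' v
        simp only [hGdef]
        linarith
      have hFz : ∀ v, v ≤ b → F v = 0 := by
        intro v hv
        by_contra hc
        obtain ⟨t, ht, htv⟩ := mar_pos_elem hc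
        have := (fiber_facts S α hg t ht).2
        omega
      have hGz : ∀ v, v ≤ b → G v = 0 := by
        intro v hv
        by_contra hc
        obtain ⟨t, ht, htv⟩ := mar_pos_elem hc
        have := (fiber_facts S' α' hg' t ht).2
        omega
      have hFN : ∀ v, Nv < v → F v = 0 := by
        intro v hv
        by_contra hc
        obtain ⟨t, ht, htv⟩ := mar_pos_elem hc
        have := hNv t (Finset.mem_union_left _ (Finset.mem_filter.mp ht).1)
        omega
      have hGN : ∀ v, Nv < v → G v = 0 := by
        intro v hv
        by_contra hc
        obtain ⟨t, ht, htv⟩ := mar_pos_elem hc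
        have := hNv t (Finset.mem_union_right _ (Finset.mem_filter.mp ht).1)
        omega
      have hFfull : ∀ v w0, b < v → v < w0 → F w0 ≠ 0 → F v = μ v := by
        intro v w0 hbv hvw hw0
        have h1 := hdecS (k+1) v
        have hzero : mar (S.filter (fun t => picore (k+1) t ≠ ustar)) α (k+1) v = 0 := by
          by_contra hc
          obtain ⟨s, hs, hsv⟩ := mar_pos_elem hc
          exact claimA S α hg rfl v w0 hbv hvw hw0 s (Finset.mem_filter.mp hs).1
            (Finset.mem_filter.mp hs).2 hsv
        simp only [hμdef, hFdef]
        linarith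
      have hGfull : ∀ v w0, b < v → v < w0 → G w0 ≠ 0 → G v = μ v := by
        intro v w0 hbv hvw hw0
        have h1 := hdecS' (k+1) v
        have hzero : mar (S'.filter (fun t => picore (k+1) t ≠ ustar)) α' (k+1) v = 0 := by
          by_contra hc
          obtain ⟨s, hs, hsv⟩ := mar_pos_elem hc
          exact claimA S' α' hg' hPeq.symm v w0 hbv hvw hw0 s (Finset.mem_filter.mp hs).1
            (Finset.mem_filter.mp hs).2 hsv
        have h3 := hμ' v
        simp only [hGdef]
        linarith
      have htotF : ∑ v ∈ Finset.Ioc b Nv, F v = palpha S α (k+1) ustar := by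
        have h1 := sum_mar_eq_total fibS α (k+1) (Finset.Ioc b Nv) (by
          intro t ht
          refine Finset.mem_Ioc.mpr ⟨(fiber_facts S α hg t ht).2, ?_⟩
          exact hNv t (Finset.mem_union_left _ (Finset.mem_filter.mp ht).1))
        exact h1
      have htotG : ∑ v ∈ Finset.Ioc b Nv, G v = palpha S' α' (k+1) ustar := by
        have h1 := sum_mar_eq_total fibS' α' (k+1) (Finset.Ioc b Nv) (by
          intro t ht
          refine Finset.mem_Ioc.mpr ⟨(fiber_facts S' α' hg' t ht).2, ?_⟩
          exact hNv t (Finset.mem_union_right _ (Finset.mem_filter.mp ht).1))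
        exact h1
      have htot : ∑ v ∈ Finset.Ioc b Nv, F v = ∑ v ∈ Finset.Ioc b Nv, G v := by
        rw [htotF, htotG, hPα ustar hustar]
      have hFG : ∀ v, F v = G v :=
        chunk_uniq μ F G b Nv hF0 hG0 hFμ hGμ hFz hGz hFN hGN hFfull hGfull htot
      -- the fibers coincide, with the same coefficients
      have hsnoccS : ∀ t ∈ fibS, t = snocc (k+1) ustar (t (k+1)) := fun t ht =>
        eq_snocc_of_picore (hg.1.2.1 t (Finset.mem_filter.mp ht).1)
          (Finset.mem_filter.mp ht).2
      have hsnoccS' : ∀ t ∈ fibS', t = snocc (k+1) ustar (t (k+1)) := fun t ht =>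
        eq_snocc_of_picore (hg'.1.2.1 t (Finset.mem_filter.mp ht).1)
          (Finset.mem_filter.mp ht).2
      have hsingS : ∀ t ∈ fibS, F (t (k+1)) = α t := by
        intro t ht
        have hfil : fibS.filter (fun s => s (k+1) = t (k+1)) = {t} := by
          ext s
          simp only [Finset.mem_filter, Finset.mem_singleton]
          constructor
          · rintro ⟨hs, hsv⟩
            rw [hsnoccS s hs, hsv, ← hsnoccS t ht]
          · rintro rfl
            exact ⟨ht, rfl⟩
        simp only [hFdef]
        unfold mar
        rw [hfil, Finset.sum_singleton]
      have hsingS' : ∀ t ∈ fibS', G (t (k+1)) = α' t := by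
        intro t ht
        have hfil : fibS'.filter (fun s => s (k+1) = t (k+1)) = {t} := by
          ext s
          simp only [Finset.mem_filter, Finset.mem_singleton]
          constructor
          · rintro ⟨hs, hsv⟩
            rw [hsnoccS' s hs, hsv, ← hsnoccS' t ht]
          · rintro rfl
            exact ⟨ht, rfl⟩
        simp only [hGdef]
        unfold mar
        rw [hfil, Finset.sum_singleton]
      have hfib_eq : fibS = fibS' := by
        ext t
        constructor
        · intro ht
          have h1 : F (t (k+1)) = α t := hsingS t ht
          have h2 : G (t (k+1)) ≠ 0 := by
            rw [← hFG, h1]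
            exact ne_of_gt (hg.1.2.2 t (Finset.mem_filter.mp ht).1)
          obtain ⟨t', ht', ht'v⟩ := mar_pos_elem h2
          have : t' = t := by
            rw [hsnoccS' t' ht', ht'v, ← hsnoccS t ht]
          rwa [← this]
        · intro ht
          have h1 : G (t (k+1)) = α' t := hsingS' t ht
          have h2 : F (t (k+1)) ≠ 0 := by
            rw [hFG, h1]
            exact ne_of_gt (hg'.1.2.2 t (Finset.mem_filter.mp ht).1)
          obtain ⟨t', ht', ht'v⟩ := mar_pos_elem h2
          have : t' = t := by
            rw [hsnoccS t' ht', ht'v, ← hsnoccS' t ht]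
          rwa [← this]
      have hαfib : ∀ t ∈ fibS, α t = α' t := by
        intro t ht
        rw [← hsingS t ht, hFG, hsingS' t (hfib_eq ▸ ht)]
      -- remove the fiber and recurse
      have hfibne : fibS.Nonempty := by
        obtain ⟨t, ht, htpi⟩ := Finset.mem_image.mp hustar
        exact ⟨t, Finset.mem_filter.mpr ⟨ht, htpi⟩⟩
      have hcardr : (S.filter (fun t => picore (k+1) t ≠ ustar)).card ≤ N := by
        obtain ⟨t, ht⟩ := hfibne
        have hss : S.filter (fun t => picore (k+1) t ≠ ustar) ⊂ S := by
          refine Finset.ssubset_iff_of_subset (Finset.filter_subset _ _) |>.mpr ?_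
          refine ⟨t, (Finset.mem_filter.mp ht).1, ?_⟩
          intro hmem
          exact (Finset.mem_filter.mp hmem).2 (Finset.mem_filter.mp ht).2
        have := Finset.card_lt_card hss
        omega
      have hfibmar : ∀ a v, a < k+2 → mar fibS α a v = mar fibS' α' a v := by
        intro a v ha
        rcases Nat.lt_or_ge a (k+1) with hak | hak
        · rw [mar_const_coord fibS α a v (ustar a)
            (fun t ht => (fiber_facts S α hg t ht).1 a hak),
            mar_const_coord fibS' α' a v (ustar a)
            (fun t ht => (fiber_facts S' α' hg' t ht).1 a hak)]
          have htoteq : ∑ t ∈ fibS, α t = ∑ t ∈ fibS', α' t := hPα ustar hustar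
          rw [htoteq]
        · have haeq : a = k+1 := by omega
          subst haeq
          exact hFG v
      have hmarr : ∀ a v, a < k+2 →
          mar (S.filter (fun t => picore (k+1) t ≠ ustar)) α a v
          = mar (S'.filter (fun t => picore (k+1) t ≠ ustar)) α' a v := by
        intro a v ha
        have h1 := hdecS a v
        have h2 := hdecS' a v
        have h3 := hmar a v ha
        have h4 := hfibmar a v ha
        linarith
      obtain ⟨hreq, hrα⟩ := ihN (S.filter (fun t => picore (k+1) t ≠ ustar))
        (S'.filter (fun t => picore (k+1) t ≠ ustar)) α α' hcardr
        (goodk_subset hg (Finset.filter_subset _ _))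
        (goodk_subset hg' (Finset.filter_subset _ _)) hmarr
      constructor
      · have hs1 : fibS ∪ S.filter (fun t => picore (k+1) t ≠ ustar) = S :=
          Finset.filter_union_filter_not_eq _ S
        have hs2 : fibS' ∪ S'.filter (fun t => picore (k+1) t ≠ ustar) = S' :=
          Finset.filter_union_filter_not_eq _ S'
        rw [← hs1, ← hs2, hfib_eq, hreq]
      · intro I hI
        rcases Classical.em (picore (k+1) I = ustar) with hpi | hpi
        · exact hαfib I (Finset.mem_filter.mpr ⟨hI, hpi⟩)
        · exact hrα I (Finset.mem_filter.mpr ⟨hI, hpi⟩)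

end
end NCwork
namespace NCwork
noncomputable section
local instance : DecidableEq (ℕ → ℕ) := fun f g => Classical.propDecidable _
local instance : DecidableEq ℝ := fun a b => Classical.propDecidable _

lemma sum_mar_filter (T : Finset (ℕ → ℕ)) (γ : (ℕ → ℕ) → ℝ) (a : ℕ) (R : Finset ℕ)
    (p : (ℕ → ℕ) → Prop) [DecidablePred p] (hp : ∀ t ∈ T, (t a ∈ R ↔ p t)) :
    ∑ v ∈ R, mar T γ a v = ∑ t ∈ T.filter p, γ t := by
  have h1 : ∀ v ∈ R, mar T γ a v = mar (T.filter p) γ a v := by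
    intro v hv
    unfold mar
    apply Finset.sum_congr
    · ext t
      simp only [Finset.mem_filter]
      constructor
      · rintro ⟨ht, htv⟩
        exact ⟨⟨ht, (hp t ht).mp (htv ▸ hv)⟩, htv⟩
      · rintro ⟨⟨ht, _⟩, htv⟩
        exact ⟨ht, htv⟩
    · intro t _; rfl
  rw [Finset.sum_congr rfl h1]
  apply sum_mar_eq_total
  intro t ht
  have h2 := Finset.mem_filter.mp ht
  exact (hp t h2.1).mpr h2.2

theorem core_exists : ∀ (k : ℕ) (S₀ : Finset (ℕ → ℕ)) (α₀ : (ℕ → ℕ) → ℝ),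
    Ok (k+1) S₀ α₀ →
    ∃ S α, Goodk (k+1) S α ∧ (∀ a v, a < k+1 → mar S α a v = mar S₀ α₀ a v) ∧
      (∑ I ∈ S, α I) = ∑ I ∈ S₀, α₀ I := by
  intro k
  induction k with
  | zero =>
    intro S₀ α₀ hok
    obtain ⟨hsm0, hstd0, hpos0⟩ := hok
    refine ⟨S₀.image (picore 1), palpha S₀ α₀ 1, ⟨⟨?_, ?_, ?_⟩, ?_⟩, ?_, ?_⟩
    · intro I _ a bb hab hbb
      omega
    · intro I hI
      obtain ⟨J, _, rfl⟩ := Finset.mem_image.mp hI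
      exact picore_std 1 J
    · intro I hI
      obtain ⟨J, hJ, hJI⟩ := Finset.mem_image.mp hI
      apply Finset.sum_pos
      · intro t ht
        exact hpos0 t (Finset.mem_filter.mp ht).1
      · exact ⟨J, Finset.mem_filter.mpr ⟨hJ, hJI⟩⟩
    · intro I _ J _ _
      intro a bb hab hbb _ _
      omega
    · intro a v ha
      have ha0 : a = 0 := by omega
      subst ha0
      exact mar_proj S₀ α₀ 1 0 v (by omega)
    · exact sum_palpha S₀ α₀ 1
  | succ k ihk =>
    intro S₀ α₀ hok
    obtain ⟨hsm0, hstd0, hpos0⟩ := hok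
    obtain ⟨B, β, hBgood, hBmar, hBtot⟩ := ihk (S₀.image (picore (k+1)))
      (palpha S₀ α₀ (k+1)) (ok_proj ⟨hsm0, hstd0, hpos0⟩)
    have hBmar' : ∀ a v, a < k+1 → mar B β a v = mar S₀ α₀ a v := by
      intro a v ha
      rw [hBmar a v ha, mar_proj S₀ α₀ (k+1) a v ha]
    have hBtot' : (∑ u ∈ B, β u) = ∑ I ∈ S₀, α₀ I := by
      rw [hBtot, sum_palpha]
    obtain ⟨Nb, hNb⟩ : ∃ Nb, ∀ t ∈ S₀, t (k+1) ≤ Nb :=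
      ⟨S₀.sup (fun t => t (k+1)), fun t ht => Finset.le_sup (f := fun t => t (k+1)) ht⟩
    set ν := fun v => mar S₀ α₀ (k+1) v with hνdef
    have hν0 : ∀ v, 0 ≤ ν v := fun v => mar_nonneg hpos0
    have hνN : ∀ v, Nb < v → ν v = 0 := by
      intro v hv
      by_contra hc
      obtain ⟨t, ht, htv⟩ := mar_pos_elem hc
      have := hNb t ht
      omega
    have hν00 : ν 0 = 0 := by
      by_contra hc
      obtain ⟨t, ht, htv⟩ := mar_pos_elem hc
      have := hsm0 t ht k (k+1) (by omega) (by omega)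
      omega
    have hνIoc : ∀ c, ∑ v ∈ Finset.Ioc c Nb, ν v
        = ∑ t ∈ S₀.filter (fun t => c < t (k+1)), α₀ t := by
      intro c
      apply sum_mar_filter
      intro t ht
      simp only [Finset.mem_Ioc]
      constructor
      · rintro ⟨h1, _⟩; exact h1
      · intro h1; exact ⟨h1, hNb t ht⟩
    have hBk_bound : ∀ u ∈ B, u k ≤ Nb := by
      intro u hu
      have h1 : β u ≤ mar B β k (u k) := mem_mar_le hBgood.1.2.2 hu rfl
      have h2 : mar B β k (u k) ≠ 0 := by
        have := hBgood.1.2.2 u hu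
        intro h; rw [h] at h1; linarith
      rw [hBmar' k (u k) (by omega)] at h2
      obtain ⟨t, ht, htv⟩ := mar_pos_elem h2
      have h3 := hsm0 t ht k (k+1) (by omega) (by omega)
      have h4 := hNb t ht
      omega
    have hinv : ∀ c, (∑ u ∈ B.filter (fun u => c ≤ u k), β u)
        ≤ ∑ v ∈ Finset.Ioc c Nb, ν v := by
      intro c
      have h1 : (∑ u ∈ B.filter (fun u => c ≤ u k), β u)
          = ∑ v ∈ Finset.Icc c Nb, mar B β k v := by
        symm
        apply sum_mar_filter
        intro u hu
        simp only [Finset.mem_Icc]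
        constructor
        · rintro ⟨h2, _⟩; exact h2
        · intro h2; exact ⟨h2, hBk_bound u hu⟩
      have h2 : (∑ v ∈ Finset.Icc c Nb, mar B β k v)
          = ∑ t ∈ S₀.filter (fun t => c ≤ t k), α₀ t := by
        have h3 : ∀ v ∈ Finset.Icc c Nb, mar B β k v = mar S₀ α₀ k v :=
          fun v _ => hBmar' k v (by omega)
        rw [Finset.sum_congr rfl h3]
        apply sum_mar_filter
        intro t ht
        simp only [Finset.mem_Icc]
        constructor
        · rintro ⟨h4, _⟩; exact h4
        · intro h4
          refine ⟨h4, ?_⟩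
          have h5 := hsm0 t ht k (k+1) (by omega) (by omega)
          have h6 := hNb t ht
          omega
      rw [h1, h2, hνIoc c]
      apply Finset.sum_le_sum_of_subset_of_nonneg
      · intro t ht
        have h7 := Finset.mem_filter.mp ht
        refine Finset.mem_filter.mpr ⟨h7.1, ?_⟩
        have h8 := hsm0 t h7.1 k (k+1) (by omega) (by omega)
        omega
      · intro t ht _
        exact le_of_lt (hpos0 t (Finset.mem_filter.mp ht).1)
    have htot : (∑ u ∈ B, β u) = ∑ v ∈ Finset.Ioc 0 Nb, ν v := by
      rw [hνIoc 0, hBtot']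
      symm
      apply Finset.sum_congr
      · apply Finset.filter_true_of_mem
        intro t ht
        have := hsm0 t ht k (k+1) (by omega) (by omega)
        omega
      · intro t _; rfl
    obtain ⟨S, α, hSgood, hSpi, hSmar, hSlast⟩ :=
      ext_lemma B.card k B β ν Nb le_rfl hBgood hν0 hνN hν00 hinv htot
    refine ⟨S, α, hSgood, ?_, ?_⟩
    · intro a v ha
      rcases Nat.lt_or_ge a (k+1) with hak | hak
      · rw [hSmar a v hak, hBmar' a v hak]
      · have haeq : a = k+1 := by omega
        subst haeq
        rw [hSlast v]
    · have hSbound : ∀ t ∈ S, t (k+1) ≤ Nb := by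
        intro t ht
        have h1 : α t ≤ mar S α (k+1) (t (k+1)) := mem_mar_le hSgood.1.2.2 ht rfl
        have h2 := hSgood.1.2.2 t ht
        by_contra hc
        push_neg at hc
        rw [hSlast (t (k+1)), hνN (t (k+1)) hc] at h1
        linarith
      have h1 : (∑ t ∈ S, α t) = ∑ v ∈ Finset.Ioc 0 Nb, mar S α (k+1) v := by
        symm
        have := sum_mar_filter S α (k+1) (Finset.Ioc 0 Nb)
          (fun t => 0 < t (k+1)) (by
            intro t ht
            simp only [Finset.mem_Ioc]
            constructor
            · rintro ⟨h2, _⟩; exact h2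
            · intro h2; exact ⟨h2, hSbound t ht⟩)
        rw [this]
        apply Finset.sum_congr
        · apply Finset.filter_true_of_mem
          intro t ht
          have := hSgood.1.1 t ht k (k+1) (by omega) (by omega)
          omega
        · intro t _; rfl
      rw [h1]
      have h2 : ∀ v ∈ Finset.Ioc 0 Nb, mar S α (k+1) v = ν v :=
        fun v _ => hSlast v
      rw [Finset.sum_congr rfl h2, ← htot, hBtot']
end
end NCwork
namespace NCwork
noncomputable section
local instance : DecidableEq (ℕ → ℕ) := fun f g => Classical.propDecidable _
local instance : DecidableEq ℝ := fun a b => Classical.propDecidable _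

lemma sm_lower {k : ℕ} {u : ℕ → ℕ} (h : SM k u) (h0 : 1 ≤ u 0) :
    ∀ a, a < k → a + 1 ≤ u a := by
  intro a
  induction a with
  | zero => intro _; exact h0
  | succ a ih =>
    intro ha
    have h1 := ih (by omega)
    have h2 := h a (a+1) (by omega) ha
    omega

lemma sm_add {k : ℕ} {u : ℕ → ℕ} (h : SM k u) :
    ∀ d a, a + d < k → u a + d ≤ u (a + d) := by
  intro d
  induction d with
  | zero => intro a _; simp
  | succ d ih =>
    intro a ha
    have h1 := ih a (by omega)
    have h2 := h (a + d) (a + d + 1) (by omega) (by omega)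
    have h3 : a + (d+1) = (a + d) + 1 := by omega
    rw [h3]
    omega

lemma cum_from_mar (T : Finset (ℕ → ℕ)) (γ : (ℕ → ℕ) → ℝ) (a c : ℕ) :
    ∑ I ∈ T.filter (fun I => I a ≤ c), γ I = ∑ v ∈ Finset.range (c+1), mar T γ a v := by
  symm
  apply sum_mar_filter
  intro t _
  simp only [Finset.mem_range]
  omega

lemma mar_split (T : Finset (ℕ → ℕ)) (γ : (ℕ → ℕ) → ℝ) (a v : ℕ) (hv : 1 ≤ v) :
    mar T γ a v = (∑ I ∈ T.filter (fun I => I a ≤ v), γ I)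
      - ∑ I ∈ T.filter (fun I => I a ≤ v - 1), γ I := by
  have hun : T.filter (fun I => I a ≤ v)
      = T.filter (fun I => I a ≤ v - 1) ∪ T.filter (fun I => I a = v) := by
    ext I
    simp only [Finset.mem_filter, Finset.mem_union]
    constructor
    · rintro ⟨hI, h2⟩
      rcases Nat.lt_or_ge (I a) v with h3 | h3
      · exact Or.inl ⟨hI, by omega⟩
      · exact Or.inr ⟨hI, by omega⟩
    · rintro (⟨hI, h2⟩ | ⟨hI, h2⟩) <;> exact ⟨hI, by omega⟩
  have hdis : Disjoint (T.filter (fun I => I a ≤ v - 1)) (T.filter (fun I => I a = v)) := by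
    rw [Finset.disjoint_left]
    intro I h1 h2
    have := (Finset.mem_filter.mp h1).2
    have := (Finset.mem_filter.mp h2).2
    omega
  rw [hun, Finset.sum_union hdis]
  unfold mar
  ring

lemma mar_zero_cum (T : Finset (ℕ → ℕ)) (γ : (ℕ → ℕ) → ℝ) (a : ℕ) :
    mar T γ a 0 = ∑ I ∈ T.filter (fun I => I a ≤ 0), γ I := by
  unfold mar
  apply Finset.sum_congr _ (fun _ _ => rfl)
  ext I
  simp only [Finset.mem_filter]
  exact ⟨fun ⟨h1, h2⟩ => ⟨h1, by omega⟩, fun ⟨h1, h2⟩ => ⟨h1, by omega⟩⟩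

lemma sum_ind (T : Finset (ℕ → ℕ)) (γ : (ℕ → ℕ) → ℝ) (a c : ℕ) :
    ∑ I ∈ T, γ I * (if I a ≤ c then (1:ℝ) else 0)
      = ∑ I ∈ T.filter (fun I => I a ≤ c), γ I := by
  rw [Finset.sum_filter]
  apply Finset.sum_congr rfl
  intro I _
  split <;> ring

/-- two representations of the same point have the same cumulative margins -/
lemma cum_eq_of_reps {k m : ℕ} (hm : 0 < m) (x : Fin k × Fin m → ℝ)
    (T T' : Finset (ℕ → ℕ)) (γ γ' : (ℕ → ℕ) → ℝ)
    (hbd : ∀ I ∈ T, ∀ a, a < k → a + 1 ≤ I a ∧ I a ≤ a + 1 + m)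
    (hbd' : ∀ I ∈ T', ∀ a, a < k → a + 1 ≤ I a ∧ I a ≤ a + 1 + m)
    (hsum : ∑ I ∈ T, γ I = 1) (hsum' : ∑ I ∈ T', γ' I = 1)
    (hx : ∀ (a : ℕ) (ha : a < k) (b : ℕ) (hb : b < m),
      x (⟨a, ha⟩, ⟨b, hb⟩) = ∑ I ∈ T.filter (fun I => I a ≤ a + b + 1), γ I)
    (hx' : ∀ (a : ℕ) (ha : a < k) (b : ℕ) (hb : b < m),
      x (⟨a, ha⟩, ⟨b, hb⟩) = ∑ I ∈ T'.filter (fun I => I a ≤ a + b + 1), γ' I) :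
    ∀ a, a < k → ∀ c, (∑ I ∈ T.filter (fun I => I a ≤ c), γ I)
      = ∑ I ∈ T'.filter (fun I => I a ≤ c), γ' I := by
  intro a ha c
  rcases Nat.lt_or_ge a c with h1 | h1
  · rcases Nat.lt_or_ge c (a + m + 1) with h2 | h2
    · have hb : c - a - 1 < m := by omega
      have hc : a + (c - a - 1) + 1 = c := by omega
      have e1 := hx a ha (c - a - 1) hb
      have e2 := hx' a ha (c - a - 1) hb
      rw [hc] at e1 e2
      rw [← e1, ← e2]
    · have hfull : ∀ (U : Finset (ℕ → ℕ)),
        (∀ I ∈ U, ∀ a', a' < k → a' + 1 ≤ I a' ∧ I a' ≤ a' + 1 + m) →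
          U.filter (fun I => I a ≤ c) = U := by
        intro U hU
        apply Finset.filter_true_of_mem
        intro I hI
        have := (hU I hI a ha).2
        omega
      rw [hfull T hbd, hfull T' hbd', hsum, hsum']
  · have hempty : ∀ (U : Finset (ℕ → ℕ)),
        (∀ I ∈ U, ∀ a', a' < k → a' + 1 ≤ I a' ∧ I a' ≤ a' + 1 + m) →
        U.filter (fun I => I a ≤ c) = ∅ := by
      intro U hU
      rw [Finset.filter_eq_empty_iff]
      intro I hI
      have := (hU I hI a ha).1
      omega
    rw [hempty T hbd, hempty T' hbd']
    simp

lemma mar_eq_of_reps {k m : ℕ} (hm : 0 < m) (x : Fin k × Fin m → ℝ)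
    (T T' : Finset (ℕ → ℕ)) (γ γ' : (ℕ → ℕ) → ℝ)
    (hbd : ∀ I ∈ T, ∀ a, a < k → a + 1 ≤ I a ∧ I a ≤ a + 1 + m)
    (hbd' : ∀ I ∈ T', ∀ a, a < k → a + 1 ≤ I a ∧ I a ≤ a + 1 + m)
    (hsum : ∑ I ∈ T, γ I = 1) (hsum' : ∑ I ∈ T', γ' I = 1)
    (hx : ∀ (a : ℕ) (ha : a < k) (b : ℕ) (hb : b < m),
      x (⟨a, ha⟩, ⟨b, hb⟩) = ∑ I ∈ T.filter (fun I => I a ≤ a + b + 1), γ I)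
    (hx' : ∀ (a : ℕ) (ha : a < k) (b : ℕ) (hb : b < m),
      x (⟨a, ha⟩, ⟨b, hb⟩) = ∑ I ∈ T'.filter (fun I => I a ≤ a + b + 1), γ' I) :
    ∀ a, a < k → ∀ v, mar T γ a v = mar T' γ' a v := by
  have hcum := cum_eq_of_reps hm x T T' γ γ' hbd hbd' hsum hsum' hx hx'
  intro a ha v
  rcases Nat.eq_zero_or_pos v with hv | hv
  · subst hv
    rw [mar_zero_cum, mar_zero_cum, hcum a ha 0]
  · rw [mar_split T γ a v hv, mar_split T' γ' a v hv, hcum a ha v, hcum a ha (v-1)]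

-- conversions between `Fin k → ℕ` and standardized core vectors
def toCore {k : ℕ} (I : Fin k → ℕ) : ℕ → ℕ := fun a => if h : a < k then I ⟨a, h⟩ else 0

def toFin {k : ℕ} (u : ℕ → ℕ) : Fin k → ℕ := fun a => u a.val

lemma toCore_eval {k : ℕ} (I : Fin k → ℕ) {a : ℕ} (ha : a < k) :
    toCore I a = I ⟨a, ha⟩ := dif_pos ha

lemma toFin_toCore {k : ℕ} (I : Fin k → ℕ) : toFin (toCore I) = I := by
  funext a
  unfold toFin
  rw [toCore_eval I a.isLt]

lemma toCore_toFin {k : ℕ} {u : ℕ → ℕ} (hu : Std k u) : toCore (toFin (k := k) u) = u := by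
  funext a
  rcases Nat.lt_or_ge a k with ha | ha
  · rw [toCore_eval _ ha]; rfl
  · unfold toCore
    rw [dif_neg (by omega), hu a ha]

lemma toCore_std {k : ℕ} (I : Fin k → ℕ) : Std k (toCore I) := by
  intro a ha
  unfold toCore
  rw [dif_neg (by omega)]

lemma toCore_sm {k : ℕ} {I : Fin k → ℕ} (h : StrictMono I) : SM k (toCore I) := by
  intro a b hab hb
  rw [toCore_eval I (by omega), toCore_eval I hb]
  exact h (by simp [Fin.lt_def]; omega)

lemma toCore_nc {k : ℕ} {I J : Fin k → ℕ} (h : NonCrossing I J) :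
    NC k (toCore I) (toCore J) := by
  intro a b hab hb hmid
  rw [toCore_eval I (show a < k by omega), toCore_eval I hb,
    toCore_eval J (show a < k by omega), toCore_eval J hb]
  apply h ⟨a, by omega⟩ ⟨b, hb⟩ (by simp [Fin.lt_def]; omega)
  intro l hl1 hl2
  have hl1' : a < l.val := by simpa [Fin.lt_def] using hl1
  have hl2' : l.val < b := by simpa [Fin.lt_def] using hl2
  have := hmid l.val hl1' hl2'
  rwa [toCore_eval I l.isLt, toCore_eval J l.isLt] at this
  -- note : `⟨l.val, _⟩ = l`

lemma nc_toFin {k : ℕ} {u w : ℕ → ℕ} (h : NC k u w) :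
    NonCrossing (toFin (k := k) u) (toFin w) := by
  intro a b hab hmid
  have hab' : a.val < b.val := hab
  apply h a.val b.val hab' b.isLt
  intro l hl1 hl2
  have := hmid ⟨l, by omega⟩ (by simp [Fin.lt_def]; omega) (by simp [Fin.lt_def]; omega)
  exact this

lemma noncrossing_self {k : ℕ} (I : Fin k → ℕ) : NonCrossing I I := by
  intro a b hab hmid hc
  rcases hc with ⟨h1, _, _⟩ | ⟨h1, _, _⟩ <;> omega

end
end NCwork
/-- the noncrossing complex triangulates the order polytope
`O_{k,n} = conv{χ_I : I ∈ V_{k,n}}`: every point of `O_{k,n}` is in a unique way a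
convex combination with strictly positive coefficients of the characteristic vectors
of a pairwise noncrossing subset of `V_{k,n}`. -/
theorem stmt11 {n k : ℕ} (hk : 0 < k) (hkn : k < n)
    (x : Fin k × Fin (n - k) → ℝ)
    (hx : x ∈ convexHull ℝ {y | ∃ I : Fin k → ℕ, IsVkn n I ∧ y = chiR (n - k) I}) :
    ∃ (S : Finset (Fin k → ℕ)) (α : (Fin k → ℕ) → ℝ),
      ((∀ I ∈ S, IsVkn n I) ∧ (∀ I ∈ S, ∀ J ∈ S, NonCrossing I J) ∧
        (∀ I ∈ S, 0 < α I) ∧ (∑ I ∈ S, α I) = 1 ∧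
        x = ∑ I ∈ S, α I • chiR (n - k) I) ∧
      ∀ (S' : Finset (Fin k → ℕ)) (α' : (Fin k → ℕ) → ℝ),
        ((∀ I ∈ S', IsVkn n I) ∧ (∀ I ∈ S', ∀ J ∈ S', NonCrossing I J) ∧
          (∀ I ∈ S', 0 < α' I) ∧ (∑ I ∈ S', α' I) = 1 ∧
          x = ∑ I ∈ S', α' I • chiR (n - k) I) →
        S' = S ∧ ∀ I ∈ S, α' I = α I := by
  classical
  open NCwork in
  obtain ⟨k', rfl⟩ : ∃ k', k = k'+1 := ⟨k-1, by omega⟩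
  have hm : 0 < n - (k'+1) := by omega
  have hnm : n = (k'+1) + (n - (k'+1)) := by omega
  -- extract an initial (possibly crossing) representation
  rw [convexHull_eq] at hx
  obtain ⟨ι, t, w, z, hw0, hw1, hz, hxc⟩ := hx
  have hchoice : ∀ i : ι, ∃ I : Fin (k'+1) → ℕ,
      i ∈ t → (IsVkn n I ∧ z i = chiR (n-(k'+1)) I) := by
    intro i
    rcases Classical.em (i ∈ t) with h | h
    · obtain ⟨I, hI⟩ := hz i h
      exact ⟨I, fun _ => hI⟩
    · exact ⟨fun _ => 0, fun h' => absurd h' h⟩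
  choose g hg using hchoice
  set gc : ι → (ℕ → ℕ) := fun i => toCore (g i) with hgcdef
  set α₀ : (ℕ → ℕ) → ℝ := fun u => ∑ i ∈ t.filter (fun i => gc i = u), w i with hα₀def
  set S₀ : Finset (ℕ → ℕ) := (t.image gc).filter (fun u => α₀ u ≠ 0) with hS₀def
  have hα₀nonneg : ∀ u, 0 ≤ α₀ u := by
    intro u
    apply Finset.sum_nonneg
    intro i hi
    exact hw0 i (Finset.mem_filter.mp hi).1
  have hgroup : ∀ C : (ℕ → ℕ) → ℝ,
      (∑ i ∈ t, w i * C (gc i)) = ∑ u ∈ t.image gc, α₀ u * C u := by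
    intro C
    rw [← Finset.sum_fiberwise_of_maps_to (fun i hi => Finset.mem_image_of_mem gc hi)
      (fun i => w i * C (gc i))]
    apply Finset.sum_congr rfl
    intro u hu
    have h1 : ∀ i ∈ t.filter (fun i => gc i = u), w i * C (gc i) = w i * C u := by
      intro i hi
      rw [(Finset.mem_filter.mp hi).2]
    rw [Finset.sum_congr rfl h1, ← Finset.sum_mul]
  have hgroup' : ∀ C : (ℕ → ℕ) → ℝ,
      (∑ i ∈ t, w i * C (gc i)) = ∑ u ∈ S₀, α₀ u * C u := by
    intro C
    rw [hgroup C, hS₀def]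
    symm
    apply Finset.sum_filter_of_ne
    intro u _ hne hzero
    rw [hzero] at hne
    simp at hne
  have hS₀sum : (∑ u ∈ S₀, α₀ u) = 1 := by
    have := hgroup' (fun _ => 1)
    simp only [mul_one] at this
    rw [← this, hw1]
  have hS₀mem : ∀ u ∈ S₀, ∃ i ∈ t, gc i = u := by
    intro u hu
    rw [hS₀def] at hu
    obtain ⟨i, hi, hiu⟩ := Finset.mem_image.mp (Finset.mem_filter.mp hu).1
    exact ⟨i, hi, hiu⟩
  have hS₀pos : ∀ u ∈ S₀, 0 < α₀ u := by
    intro u hu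
    rw [hS₀def] at hu
    exact lt_of_le_of_ne (hα₀nonneg u) (Ne.symm (Finset.mem_filter.mp hu).2)
  have hS₀ok : NCwork.Ok (k'+1) S₀ α₀ := by
    refine ⟨?_, ?_, hS₀pos⟩
    · intro u hu
      obtain ⟨i, hi, rfl⟩ := hS₀mem u hu
      exact toCore_sm ((hg i hi).1).1
    · intro u hu
      obtain ⟨i, hi, rfl⟩ := hS₀mem u hu
      exact toCore_std (g i)
  have hbd₀ : ∀ u ∈ S₀, ∀ a, a < k'+1 → a + 1 ≤ u a ∧ u a ≤ a + 1 + (n - (k'+1)) := by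
    intro u hu a ha
    obtain ⟨i, hi, rfl⟩ := hS₀mem u hu
    simp only [hgcdef]
    obtain ⟨hsm, hbds⟩ := (hg i hi).1
    have hsmc : NCwork.SM (k'+1) (toCore (g i)) := toCore_sm hsm
    have h0 : 1 ≤ toCore (g i) 0 := by
      rw [toCore_eval (g i) (by omega : (0:ℕ) < k'+1)]
      exact (hbds _).1
    have hlow := sm_lower hsmc h0 a ha
    have hupk : toCore (g i) k' ≤ n := by
      rw [toCore_eval (g i) (by omega : k' < k'+1)]
      exact (hbds _).2
    have hadd := sm_add hsmc (k' - a) a (by omega)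
    have haa : a + (k' - a) = k' := by omega
    rw [haa] at hadd
    exact ⟨hlow, by omega⟩
  -- pointwise representation of x through S₀
  have hxcp : ∀ p : Fin (k'+1) × Fin (n - (k'+1)), x p = ∑ i ∈ t, w i * z i p := by
    intro p
    rw [← hxc, Finset.centerMass_eq_of_sum_1 t z hw1]
    rw [Finset.sum_apply]
    apply Finset.sum_congr rfl
    intro i _
    simp [Pi.smul_apply]
  have hxp : ∀ (a : ℕ) (ha : a < k'+1) (b : ℕ) (hb : b < n - (k'+1)),
      x (⟨a, ha⟩, ⟨b, hb⟩) = ∑ u ∈ S₀.filter (fun u => u a ≤ a + b + 1), α₀ u := by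
    intro a ha b hb
    rw [hxcp (⟨a, ha⟩, ⟨b, hb⟩), ← sum_ind S₀ α₀ a (a + b + 1), ← hgroup'
      (fun u => if u a ≤ a + b + 1 then (1:ℝ) else 0)]
    apply Finset.sum_congr rfl
    intro i hi
    have hzi : z i = chiR (n-(k'+1)) (g i) := (hg i hi).2
    rw [hzi]
    unfold chiR
    congr 1
    have : gc i a = g i ⟨a, ha⟩ := toCore_eval (g i) ha
    simp only [this]
  -- build the noncrossing representation
  obtain ⟨Sc, αc, hGood, hMar, hTot⟩ := core_exists k' S₀ α₀ hS₀ok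
  have hTot1 : (∑ u ∈ Sc, αc u) = 1 := by rw [hTot, hS₀sum]
  have hbdc : ∀ u ∈ Sc, ∀ a, a < k'+1 → a + 1 ≤ u a ∧ u a ≤ a + 1 + (n - (k'+1)) := by
    intro u hu a ha
    have h1 : αc u ≤ NCwork.mar Sc αc a (u a) := mem_mar_le hGood.1.2.2 hu rfl
    have h2 : NCwork.mar S₀ α₀ a (u a) ≠ 0 := by
      rw [← hMar a (u a) ha]
      have := hGood.1.2.2 u hu
      intro h; rw [h] at h1; linarith
    obtain ⟨I₀, hI₀, hI₀v⟩ := mar_pos_elem h2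
    have := hbd₀ I₀ hI₀ a ha
    omega
  have hxpc : ∀ (a : ℕ) (ha : a < k'+1) (b : ℕ) (hb : b < n - (k'+1)),
      x (⟨a, ha⟩, ⟨b, hb⟩) = ∑ u ∈ Sc.filter (fun u => u a ≤ a + b + 1), αc u := by
    intro a ha b hb
    rw [hxp a ha b hb, cum_from_mar S₀ α₀ a (a+b+1), cum_from_mar Sc αc a (a+b+1)]
    apply Finset.sum_congr rfl
    intro v _
    rw [hMar a v ha]
  -- final data
  set Sf : Finset (Fin (k'+1) → ℕ) := Sc.image (toFin (k := k'+1)) with hSfdef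
  set αf : (Fin (k'+1) → ℕ) → ℝ := fun J => αc (toCore J) with hαfdef
  have hScstd : ∀ u ∈ Sc, NCwork.Std (k'+1) u := hGood.1.2.1
  have hinj : ∀ u1 ∈ Sc, ∀ u2 ∈ Sc, toFin (k := k'+1) u1 = toFin u2 → u1 = u2 := by
    intro u1 h1 u2 h2 h
    rw [← toCore_toFin (hScstd u1 h1), ← toCore_toFin (hScstd u2 h2), h]
  have hSfmem : ∀ J ∈ Sf, ∃ u ∈ Sc, toFin (k := k'+1) u = J ∧ toCore J = u := by
    intro J hJ
    obtain ⟨u, hu, huJ⟩ := Finset.mem_image.mp hJ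
    exact ⟨u, hu, huJ, by rw [← huJ, toCore_toFin (hScstd u hu)]⟩
  have hrepSf : ∀ (T : Finset (Fin (k'+1) → ℕ)) (γ : (Fin (k'+1) → ℕ) → ℝ)
      (p : Fin (k'+1) × Fin (n-(k'+1))),
      (∑ J ∈ T, γ J • chiR (n-(k'+1)) J) p
      = ∑ J ∈ T, γ J * (if toCore J p.1.val ≤ p.1.val + p.2.val + 1 then (1:ℝ) else 0) := by
    intro T γ p
    rw [Finset.sum_apply]
    apply Finset.sum_congr rfl
    intro J _
    have h1 : toCore J p.1.val = J p.1 := by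
      rw [toCore_eval J p.1.isLt]
    rw [h1]
    simp [Pi.smul_apply, chiR]
  refine ⟨Sf, αf, ⟨?_, ?_, ?_, ?_, ?_⟩, ?_⟩
  · -- IsVkn
    intro J hJ
    obtain ⟨u, hu, huJ, hJu⟩ := hSfmem J hJ
    constructor
    · intro a b hab
      have h1 : a.val < b.val := hab
      have := hGood.1.1 u hu a.val b.val h1 b.isLt
      rw [← huJ]
      exact this
    · intro a
      have := hbdc u hu a.val a.isLt
      rw [← huJ]
      unfold toFin
      omega
  · -- noncrossing
    intro I hI J hJ
    obtain ⟨u1, hu1, hu1J, _⟩ := hSfmem I hI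
    obtain ⟨u2, hu2, hu2J, _⟩ := hSfmem J hJ
    rcases Classical.em (u1 = u2) with h | h
    · rw [← hu1J, ← hu2J, h]
      exact noncrossing_self _
    · rw [← hu1J, ← hu2J]
      exact nc_toFin (hGood.2 u1 hu1 u2 hu2 h)
  · -- positivity
    intro J hJ
    obtain ⟨u, hu, _, hJu⟩ := hSfmem J hJ
    rw [hαfdef]
    simp only
    rw [hJu]
    exact hGood.1.2.2 u hu
  · -- total
    rw [hSfdef, Finset.sum_image hinj, ← hTot1]
    apply Finset.sum_congr rfl
    intro u hu
    rw [hαfdef]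
    simp only
    rw [toCore_toFin (hScstd u hu)]
  · -- x equals the combination
    funext p
    rw [hrepSf Sf αf p, hSfdef, Finset.sum_image hinj]
    have h1 : ∀ u ∈ Sc, αf (toFin u) * (if toCore (toFin (k := k'+1) u) p.1.val ≤ p.1.val + p.2.val + 1 then (1:ℝ) else 0)
        = αc u * (if u p.1.val ≤ p.1.val + p.2.val + 1 then (1:ℝ) else 0) := by
      intro u hu
      rw [hαfdef]
      simp only
      rw [toCore_toFin (hScstd u hu)]
    rw [Finset.sum_congr rfl h1, sum_ind Sc αc p.1.val (p.1.val + p.2.val + 1)]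
    have hp : p = (⟨p.1.val, p.1.isLt⟩, ⟨p.2.val, p.2.isLt⟩) := rfl
    rw [hp]
    exact hxpc p.1.val p.1.isLt p.2.val p.2.isLt
  · -- uniqueness
    rintro S' α' ⟨hVkn', hNC', hpos', hsum', hxeq'⟩
    set S'c : Finset (ℕ → ℕ) := S'.image (toCore (k := k'+1)) with hS'cdef
    set α'c : (ℕ → ℕ) → ℝ := fun u => α' (toFin u) with hα'cdef
    have hS'mem : ∀ u ∈ S'c, ∃ I ∈ S', toCore I = u ∧ toFin (k := k'+1) u = I := by
      intro u hu
      obtain ⟨I, hI, hIu⟩ := Finset.mem_image.mp hu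
      exact ⟨I, hI, hIu, by rw [← hIu, toFin_toCore]⟩
    have hGood' : NCwork.Goodk (k'+1) S'c α'c := by
      refine ⟨⟨?_, ?_, ?_⟩, ?_⟩
      · intro u hu
        obtain ⟨I, hI, hIu, _⟩ := hS'mem u hu
        rw [← hIu]
        exact toCore_sm (hVkn' I hI).1
      · intro u hu
        obtain ⟨I, hI, hIu, _⟩ := hS'mem u hu
        rw [← hIu]
        exact toCore_std I
      · intro u hu
        obtain ⟨I, hI, _, hIu⟩ := hS'mem u hu
        rw [hα'cdef]
        simp only
        rw [hIu]
        exact hpos' I hI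
      · intro u hu v hv _
        obtain ⟨I, hI, hIu, _⟩ := hS'mem u hu
        obtain ⟨J, hJ, hJv, _⟩ := hS'mem v hv
        rw [← hIu, ← hJv]
        exact toCore_nc (hNC' I hI J hJ)
    have hbd' : ∀ u ∈ S'c, ∀ a, a < k'+1 → a + 1 ≤ u a ∧ u a ≤ a + 1 + (n - (k'+1)) := by
      intro u hu a ha
      obtain ⟨I, hI, hIu, _⟩ := hS'mem u hu
      obtain ⟨hsm, hbds⟩ := hVkn' I hI
      have hsmc : NCwork.SM (k'+1) (toCore I) := toCore_sm hsm
      have h0 : 1 ≤ toCore I 0 := by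
        rw [toCore_eval I (by omega : (0:ℕ) < k'+1)]
        exact (hbds _).1
      have hupk : toCore I k' ≤ n := by
        rw [toCore_eval I (by omega : k' < k'+1)]
        exact (hbds _).2
      have hlow := sm_lower hsmc h0 a ha
      have hadd := sm_add hsmc (k' - a) a (by omega)
      have haa : a + (k' - a) = k' := by omega
      rw [haa] at hadd
      rw [← hIu]
      exact ⟨hlow, by omega⟩
    have hS'inj : ∀ I1 ∈ S', ∀ I2 ∈ S', toCore (k := k'+1) I1 = toCore I2 → I1 = I2 := by
      intro I1 _ I2 _ h
      rw [← toFin_toCore I1, ← toFin_toCore I2, h]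
    have hsum'c : (∑ u ∈ S'c, α'c u) = 1 := by
      rw [hS'cdef, Finset.sum_image hS'inj, ← hsum']
      apply Finset.sum_congr rfl
      intro I _
      rw [hα'cdef]
      simp only
      rw [toFin_toCore]
    have hxp' : ∀ (a : ℕ) (ha : a < k'+1) (b : ℕ) (hb : b < n - (k'+1)),
        x (⟨a, ha⟩, ⟨b, hb⟩) = ∑ u ∈ S'c.filter (fun u => u a ≤ a + b + 1), α'c u := by
      intro a ha b hb
      have h1 := hrepSf S' α' (⟨a, ha⟩, ⟨b, hb⟩)
      rw [hxeq', h1]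
      have h2 : ∀ I ∈ S', α' I * (if toCore I a ≤ a + b + 1 then (1:ℝ) else 0)
          = α'c (toCore I) * (if toCore I a ≤ a + b + 1 then (1:ℝ) else 0) := by
        intro I _
        rw [hα'cdef]
        simp only
        rw [toFin_toCore]
      rw [Finset.sum_congr rfl h2]
      rw [← sum_ind S'c α'c a (a + b + 1), hS'cdef, Finset.sum_image hS'inj]
    have hmars : ∀ a v, a < k'+1 → NCwork.mar Sc αc a v = NCwork.mar S'c α'c a v := by
      have := mar_eq_of_reps hm x Sc S'c αc α'c hbdc hbd' hTot1 hsum'c hxpc hxp'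
      intro a v ha
      exact this a ha v
    obtain ⟨hSeq, hαeq⟩ := core_uniq k' Sc.card Sc S'c αc α'c le_rfl hGood hGood' hmars
    constructor
    · have h1 : S'c.image (toFin (k := k'+1)) = S' := by
        rw [hS'cdef, Finset.image_image]
        have : (toFin (k := k'+1)) ∘ (toCore (k := k'+1)) = id := by
          funext I
          exact toFin_toCore I
        rw [this, Finset.image_id]
      rw [← h1, ← hSeq, ← hSfdef]
    · intro I hI
      obtain ⟨u, hu, huI, hIu⟩ := hSfmem I hI
      have h1 : α' I = α'c u := by
        rw [hα'cdef]
        simp only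
        rw [← huI]
      rw [h1, ← hαeq u hu, hαfdef]
      simp only
      rw [hIu]
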